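/- arXiv:2206.10271 — 8 statements merged into one kernel-verified Lean document; each statement's English description precedes it below -/
import Mathlib

section
/- For every nonnegative convex function G : [0,∞) → [0,∞) with G(0) = 0, G differentiable with G'(0) ≥ 0 and G' concave (nondecreasing), and for all positive integers i, j, one has (i+j)(G(i+j) − G(i) − G(j)) ≤ 2(i·G(j) + j·G(i)). -/
open Set intervalIntegral MeasureTheory

theorem stmt_0 (G : ℝ → ℝ)
    (hG_nonneg : ∀ x ∈ Ici (0:ℝ), 0 ≤ G x)
    (hG_convex : ConvexOn ℝ (Ici (0:ℝ)) G)
    (hG0 : G 0 = 0)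
    (hG_diff : DifferentiableOn ℝ G (Ici (0:ℝ)))
    (hG'0 : 0 ≤ deriv G 0)
    (hG'_concave : ConcaveOn ℝ (Ici (0:ℝ)) (deriv G)) :
    ∀ i j : ℕ, 1 ≤ i → 1 ≤ j →
      ((i : ℝ) + j) * (G ((i : ℝ) + j) - G i - G j) ≤
        2 * ((i : ℝ) * G j + (j : ℝ) * G i) := by
  set f := deriv G with hf
  -- differentiability at interior points
  have hdiff : ∀ x : ℝ, 0 < x → DifferentiableAt ℝ G x := by
    intro x hx
    exact (hG_diff x hx.le).differentiableAt (Ici_mem_nhds hx)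
  have h1 : ∀ x : ℝ, 0 < x → HasDerivAt G (f x) x := fun x hx => (hdiff x hx).hasDerivAt
  -- monotone on Ioi 0
  have hmono' : MonotoneOn f (Ioi (0:ℝ)) :=
    (hG_convex.subset Ioi_subset_Ici_self (convex_Ioi 0)).monotoneOn_deriv
      (fun x hx => hdiff x hx)
  -- concavity combination helper
  have hcomb : ∀ p a b : ℝ, 0 ≤ p → 0 ≤ a → 0 ≤ b → a + b = 1 →
      a * f p + b * f 0 ≤ f (a * p) := by
    intro p a b hp ha hb hab
    have h := hG'_concave.2 (mem_Ici.2 hp) (mem_Ici.2 (le_refl (0:ℝ))) ha hb hab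
    simpa [smul_eq_mul] using h
  -- concavity bound: f t ≥ (t/x) f x for 0 ≤ t ≤ x, 0 < x
  have hconc : ∀ x t : ℝ, 0 < x → 0 ≤ t → t ≤ x → (t / x) * f x ≤ f t := by
    intro x t hx ht htx
    have ha : 0 ≤ t / x := by positivity
    have hb : 0 ≤ 1 - t / x := by
      have : t / x ≤ 1 := (div_le_one hx).2 htx
      linarith
    have h := hcomb x (t/x) (1 - t/x) hx.le ha hb (by ring)
    rw [div_mul_cancel₀ t hx.ne'] at h
    nlinarith [hG'0]
  -- monotone on Ici 0
  have hmono : MonotoneOn f (Ici (0:ℝ)) := by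
    intro a ha b hb hab
    rcases eq_or_lt_of_le (mem_Ici.1 ha) with h0 | h0
    · rcases eq_or_lt_of_le hab with rfl | hb'
      · exact le_rfl
      · -- a = 0 < b : f 0 ≤ f b
        rw [← h0] at hb' ⊢
        -- use hconc at t = b/... : from concavity between 0 and 2b and monotonicity
        have h2b : (0:ℝ) < 2 * b := by linarith
        have h := hcomb (2*b) (1/2) (1/2) h2b.le (by norm_num) (by norm_num) (by norm_num)
        have hb2 : (1:ℝ)/2 * (2*b) = b := by ring
        rw [hb2] at h
        have hm : f b ≤ f (2*b) := hmono' (mem_Ioi.2 hb') (mem_Ioi.2 h2b) (by linarith)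
        linarith
    · exact hmono' (mem_Ioi.2 h0) (mem_Ioi.2 (lt_of_lt_of_le h0 hab)) hab
  have hfnn : ∀ t : ℝ, 0 ≤ t → 0 ≤ f t := by
    intro t ht
    exact le_trans hG'0 (hmono (mem_Ici.2 le_rfl) (mem_Ici.2 ht) ht)
  -- subadditivity of f
  have hsub : ∀ x y : ℝ, 0 ≤ x → 0 ≤ y → f (x + y) ≤ f x + f y := by
    intro x y hx hy
    rcases eq_or_lt_of_le (by positivity : (0:ℝ) ≤ x + y) with hs | hs
    · obtain hx0 : x = 0 := by linarith
      obtain hy0 : y = 0 := by linarith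
      subst hx0; subst hy0
      have h0 := hfnn 0 le_rfl
      norm_num
      linarith
    · have h1' := hconc (x+y) x hs hx (by linarith)
      have h2' := hconc (x+y) y hs hy (by linarith)
      have : x / (x+y) * f (x+y) + y / (x+y) * f (x+y) = f (x+y) := by
        field_simp
      nlinarith
  -- interval integrability
  have hint : ∀ a b : ℝ, 0 ≤ a → a ≤ b → IntervalIntegrable f volume a b := by
    intro a b ha hab
    exact (hmono.mono (by rw [uIcc_of_le hab]; exact fun t ht => le_trans ha ht.1)).intervalIntegrable
  -- FTC
  have hftc : ∀ a b : ℝ, 0 ≤ a → a ≤ b → ∫ t in a..b, f t = G b - G a := by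
    intro a b ha hab
    apply integral_eq_sub_of_hasDeriv_right_of_le hab
    · exact (hG_diff.continuousOn).mono (fun t ht => le_trans ha ht.1)
    · intro t ht
      exact (h1 t (lt_of_le_of_lt ha ht.1)).hasDerivWithinAt
    · exact hint a b ha hab
  -- key2 : x * f x ≤ 2 * G x for x > 0
  have key2 : ∀ x : ℝ, 0 < x → x * f x ≤ 2 * G x := by
    intro x hx
    have hptw : ∀ t ∈ Icc (0:ℝ) x, (f x / x) * t ≤ f t := by
      intro t ht
      have := hconc x t hx ht.1 ht.2
      calc (f x / x) * t = (t / x) * f x := by ring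
        _ ≤ f t := this
    have hi1 : IntervalIntegrable (fun t => (f x / x) * t) volume 0 x :=
      (continuous_const.mul continuous_id).intervalIntegrable 0 x
    have hmon := integral_mono_on hx.le hi1 (hint 0 x le_rfl hx.le) hptw
    rw [hftc 0 x le_rfl hx.le, hG0, sub_zero] at hmon
    rw [intervalIntegral.integral_const_mul] at hmon
    rw [integral_id] at hmon
    have : f x / x * ((x ^ 2 - 0 ^ 2) / 2) = x * f x / 2 := by
      field_simp; ring
    rw [this] at hmon
    linarith
  -- key1 : G(x+y) - G x - G y ≤ y * f x for x, y > 0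
  have key1 : ∀ x y : ℝ, 0 < x → 0 < y → G (x + y) - G x - G y ≤ y * f x := by
    intro x y hx hy
    have hptw : ∀ t ∈ Icc x (x+y), f t ≤ f x + f (t - x) := by
      intro t ht
      have := hsub x (t - x) hx.le (by linarith [ht.1])
      have htt : x + (t - x) = t := by ring
      rw [htt] at this
      exact this
    have hmono2 : MonotoneOn (fun t => f x + f (t - x)) (uIcc x (x+y)) := by
      rw [uIcc_of_le (by linarith)]
      intro a ha b hb hab
      have : f (a - x) ≤ f (b - x) :=
        hmono (mem_Ici.2 (by linarith [ha.1])) (mem_Ici.2 (by linarith [hb.1])) (by linarith)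
      simpa using this
    have hi2 : IntervalIntegrable (fun t => f x + f (t - x)) volume x (x+y) :=
      hmono2.intervalIntegrable
    have hmon := integral_mono_on (by linarith : x ≤ x + y) (hint x (x+y) hx.le (by linarith)) hi2 hptw
    rw [hftc x (x+y) hx.le (by linarith)] at hmon
    have hsplit : (∫ t in x..(x+y), (f x + f (t - x))) = y * f x + ∫ t in x..(x+y), f (t - x) := by
      rw [intervalIntegral.integral_add (intervalIntegrable_const)]
      · rw [intervalIntegral.integral_const]
        simp [smul_eq_mul]
      · have := (hint 0 y le_rfl hy.le)
        have h := this.comp_sub_right x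
        simpa [add_comm y x] using h
    have hcv : (∫ t in x..(x+y), f (t - x)) = G y := by
      rw [intervalIntegral.integral_comp_sub_right (fun t => f t) x]
      simp only [add_sub_cancel_left, sub_self]
      rw [hftc 0 y le_rfl hy.le, hG0, sub_zero]
    rw [hsplit, hcv] at hmon
    linarith
  -- conclude
  intro i j hi hj
  have hi' : (1:ℝ) ≤ (i:ℝ) := by exact_mod_cast hi
  have hj' : (1:ℝ) ≤ (j:ℝ) := by exact_mod_cast hj
  have hxi : (0:ℝ) < (i:ℝ) := by linarith
  have hxj : (0:ℝ) < (j:ℝ) := by linarith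
  have k1 := key1 (i:ℝ) (j:ℝ) hxi hxj
  have k1' := key1 (j:ℝ) (i:ℝ) hxj hxi
  rw [add_comm (j:ℝ) (i:ℝ)] at k1'
  have k2 := key2 (i:ℝ) hxi
  have k2' := key2 (j:ℝ) hxj
  nlinarith [k1, k1', k2, k2', hxi.le, hxj.le]
end

section
/- Let (ξᵢ)_{1≤i≤k} be a nonnegative solution of the truncated Safronov–Dubovskiǐ system on [0,∞) with kernel satisfying 0 ≤ γ_{i,j} = γ_{j,i} ≤ A(i+j) and initial first moment Σ_{j=1}^{k} j ξ_j(0) ≤ M. Then for each fixed i ≥ 1 there is a constant ϖᵢ depending only on A, M and i (not on k) such that |dξᵢ/dt (t)| ≤ ϖᵢ for all t ≥ 0. -/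
open Finset

lemma tele (b : ℕ → ℝ) (hb0 : b 0 = 0) (n : ℕ) :
    ∑ p ∈ Icc 1 n, (p:ℝ) * (b (p-1) - b p) = (∑ q ∈ Icc 1 (n-1), b q) - n * b n := by
  induction n with
  | zero => simp
  | succ n ih =>
    rw [Finset.sum_Icc_succ_top (by omega), ih]
    have h : (∑ q ∈ Icc 1 (n-1), b q) + b n = ∑ q ∈ Icc 1 n, b q := by
      cases n with
      | zero => simp [hb0]
      | succ m =>
        rw [show m + 1 - 1 = m from rfl, Finset.sum_Icc_succ_top (by omega)]
    simp only [Nat.add_sub_cancel]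
    push_cast
    linarith

lemma key (k : ℕ) (γ : ℕ → ℕ → ℝ) (a : ℕ → ℝ)
    (hγ0 : ∀ p q, 0 ≤ γ p q) (hγs : ∀ p q, γ p q = γ q p)
    (ha : ∀ j ∈ Icc 1 k, 0 ≤ a j) :
    ∑ p ∈ Icc 1 k, (p:ℝ) * (a (p-1) * (∑ j ∈ Icc 1 (p-1), (j:ℝ) * γ (p-1) j * a j)
      - a p * (∑ j ∈ Icc 1 p, (j:ℝ) * γ p j * a j)
      - ∑ j ∈ Icc p k, γ p j * a p * a j) ≤ 0 := by
  set b : ℕ → ℝ := fun q => a q * ∑ j ∈ Icc 1 q, (j:ℝ) * γ q j * a j with hb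
  have hb0 : b 0 = 0 := by simp [hb]
  have hbnn : ∀ q ∈ Icc 1 k, 0 ≤ b q := by
    intro q hq
    simp only [mem_Icc] at hq
    apply mul_nonneg (ha q (by simp [hq]))
    apply Finset.sum_nonneg
    intro j hj
    simp only [mem_Icc] at hj
    exact mul_nonneg (mul_nonneg (by positivity) (hγ0 q j)) (ha j (by simp only [mem_Icc]; omega))
  have split : ∑ p ∈ Icc 1 k, (p:ℝ) * (b (p-1) - b p
      - ∑ j ∈ Icc p k, γ p j * a p * a j)
      = (∑ p ∈ Icc 1 k, (p:ℝ) * (b (p-1) - b p))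
        - ∑ p ∈ Icc 1 k, (p:ℝ) * ∑ j ∈ Icc p k, γ p j * a p * a j := by
    rw [← Finset.sum_sub_distrib]
    apply Finset.sum_congr rfl
    intro p _
    ring
  have swap : ∑ p ∈ Icc 1 k, (p:ℝ) * ∑ j ∈ Icc p k, γ p j * a p * a j
      = ∑ q ∈ Icc 1 k, b q := by
    calc ∑ p ∈ Icc 1 k, (p:ℝ) * ∑ j ∈ Icc p k, γ p j * a p * a j
        = ∑ p ∈ Ico 1 (k+1), ∑ j ∈ Ico p (k+1), (p:ℝ) * (γ p j * a p * a j) := by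
          simp [Finset.Ico_add_one_right_eq_Icc, Finset.mul_sum]
      _ = ∑ j ∈ Ico 1 (k+1), ∑ p ∈ Ico 1 (j+1), (p:ℝ) * (γ p j * a p * a j) :=
          Finset.sum_Ico_Ico_comm 1 (k+1) _
      _ = ∑ q ∈ Icc 1 k, b q := by
          simp only [Finset.Ico_add_one_right_eq_Icc, hb, Finset.mul_sum]
          apply Finset.sum_congr rfl
          intro q _
          apply Finset.sum_congr rfl
          intro j _
          rw [hγs]
          ring
  calc ∑ p ∈ Icc 1 k, (p:ℝ) * (a (p-1) * (∑ j ∈ Icc 1 (p-1), (j:ℝ) * γ (p-1) j * a j)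
      - a p * (∑ j ∈ Icc 1 p, (j:ℝ) * γ p j * a j)
      - ∑ j ∈ Icc p k, γ p j * a p * a j)
      = (∑ p ∈ Icc 1 k, (p:ℝ) * (b (p-1) - b p)) - ∑ q ∈ Icc 1 k, b q := by
        rw [← swap, ← split]
    _ = ((∑ q ∈ Icc 1 (k-1), b q) - k * b k) - ∑ q ∈ Icc 1 k, b q := by
        rw [tele b hb0]
    _ ≤ 0 := by
        have h1 : ∑ q ∈ Icc 1 (k-1), b q ≤ ∑ q ∈ Icc 1 k, b q := by
          apply Finset.sum_le_sum_of_subset_of_nonneg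
          · exact Finset.Icc_subset_Icc_right (by omega)
          · intro q hq _; exact hbnn q hq
        have h2 : (0:ℝ) ≤ k * b k := by
          rcases Nat.eq_zero_or_pos k with h | h
          · simp [h, hb0]
          · exact mul_nonneg (by positivity) (hbnn k (mem_Icc.mpr ⟨h, le_refl k⟩))
        linarith

lemma sum_bound (A M : ℝ) (hA : 0 < A) (hM : 0 ≤ M) (q k m : ℕ) (hm : m ≤ k) (hq : 1 ≤ q)
    (γ : ℕ → ℕ → ℝ) (hγ0 : ∀ p r, 0 ≤ γ p r)
    (hγA : ∀ p r : ℕ, 1 ≤ p → 1 ≤ r → γ p r ≤ A * ((p : ℝ) + r))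
    (a : ℕ → ℝ) (ha : ∀ j ∈ Icc 1 k, 0 ≤ a j)
    (hmom : ∑ j ∈ Icc 1 k, (j:ℝ) * a j ≤ M) :
    ∑ j ∈ Icc 1 m, (j:ℝ) * γ q j * a j ≤ A * ((q:ℝ) + m) * M := by
  have hmomnn : ∀ s : Finset ℕ, s ⊆ Icc 1 k → ∑ j ∈ s, (j:ℝ) * a j ≤ M := by
    intro s hs
    refine le_trans (Finset.sum_le_sum_of_subset_of_nonneg hs ?_) hmom
    intro j hj _
    exact mul_nonneg (by positivity) (ha j hj)
  calc ∑ j ∈ Icc 1 m, (j:ℝ) * γ q j * a j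
      ≤ ∑ j ∈ Icc 1 m, A * ((q:ℝ) + m) * ((j:ℝ) * a j) := by
        apply Finset.sum_le_sum
        intro j hj
        simp only [mem_Icc] at hj
        have haj : 0 ≤ a j := ha j (by simp only [mem_Icc]; omega)
        have h1 : γ q j ≤ A * ((q:ℝ) + j) := hγA q j hq hj.1
        have h2 : A * ((q:ℝ) + j) ≤ A * ((q:ℝ) + m) := by
          have : (j:ℝ) ≤ m := Nat.cast_le.mpr hj.2
          nlinarith
        have hja : 0 ≤ (j:ℝ) * a j := by positivity
        nlinarith [hγ0 q j]
    _ = A * ((q:ℝ) + m) * ∑ j ∈ Icc 1 m, (j:ℝ) * a j := by rw [← Finset.mul_sum]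
    _ ≤ A * ((q:ℝ) + m) * M := by
        have hqm : (0:ℝ) ≤ A * ((q:ℝ) + m) := by positivity
        exact mul_le_mul_of_nonneg_left
          (hmomnn _ (Finset.Icc_subset_Icc_right hm)) hqm

theorem stmt_5 (A M : ℝ) (hA : 0 < A) (hM : 0 ≤ M) (i : ℕ) (hi : 1 ≤ i) :
    ∃ ϖ : ℝ, ∀ (k : ℕ), i ≤ k →
      ∀ (γ : ℕ → ℕ → ℝ) (ξ : ℕ → ℝ → ℝ) (d : ℕ → ℝ → ℝ),
        (∀ p q, 0 ≤ γ p q) →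
        (∀ p q, γ p q = γ q p) →
        (∀ p q : ℕ, 1 ≤ p → 1 ≤ q → γ p q ≤ A * ((p : ℝ) + q)) →
        (∀ p ∈ Icc 1 k, ∀ t ∈ Set.Ici (0:ℝ), 0 ≤ ξ p t) →
        (∀ p ∈ Icc 1 k, ∀ t ∈ Set.Ici (0:ℝ), HasDerivAt (ξ p) (d p t) t) →
        (∀ p ∈ Icc 1 k, ∀ t ∈ Set.Ici (0:ℝ),
          d p t = ξ (p - 1) t * ∑ j ∈ Icc 1 (p - 1), (j : ℝ) * γ (p - 1) j * ξ j t
            - ξ p t * ∑ j ∈ Icc 1 p, (j : ℝ) * γ p j * ξ j t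
            - ∑ j ∈ Icc p k, γ p j * ξ p t * ξ j t) →
        (∑ j ∈ Icc 1 k, (j : ℝ) * ξ j 0 ≤ M) →
        ∀ t ∈ Set.Ici (0:ℝ), |d i t| ≤ ϖ := by
  refine ⟨A * (5 * (i:ℝ) + 5) * M ^ 2, ?_⟩
  intro k hik γ ξ d hγ0 hγs hγA hξnn hderiv heq hM0 t ht
  have hik' : i ∈ Icc 1 k := mem_Icc.mpr ⟨hi, hik⟩
  -- the first moment is nonincreasing
  set W : ℝ → ℝ := fun s => ∑ j ∈ Icc 1 k, (j:ℝ) * ξ j s with hW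
  have hW' : ∀ s ∈ Set.Ici (0:ℝ), HasDerivAt W (∑ j ∈ Icc 1 k, (j:ℝ) * d j s) s := by
    intro s hs
    exact HasDerivAt.fun_sum fun j hj => (hderiv j hj s hs).const_mul _
  have hdW : ∀ s ∈ Set.Ici (0:ℝ), ∑ j ∈ Icc 1 k, (j:ℝ) * d j s ≤ 0 := by
    intro s hs
    have := key k γ (fun j => ξ j s) hγ0 hγs (fun j hj => hξnn j hj s hs)
    calc ∑ j ∈ Icc 1 k, (j:ℝ) * d j s
        = ∑ p ∈ Icc 1 k, (p:ℝ) * (ξ (p-1) s * (∑ j ∈ Icc 1 (p-1), (j:ℝ) * γ (p-1) j * ξ j s)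
            - ξ p s * (∑ j ∈ Icc 1 p, (j:ℝ) * γ p j * ξ j s)
            - ∑ j ∈ Icc p k, γ p j * ξ p s * ξ j s) := by
          apply Finset.sum_congr rfl
          intro p hp
          rw [heq p hp s hs]
      _ ≤ 0 := this
  have hWanti : AntitoneOn W (Set.Ici (0:ℝ)) := by
    apply antitoneOn_of_deriv_nonpos (convex_Ici 0)
    · intro s hs
      exact (hW' s hs).continuousAt.continuousWithinAt
    · intro s hs
      rw [interior_Ici] at hs
      exact ((hW' s (Set.mem_Ici.mpr (le_of_lt hs))).differentiableAt).differentiableWithinAt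
    · intro s hs
      rw [interior_Ici] at hs
      rw [(hW' s (Set.mem_Ici.mpr (le_of_lt hs))).deriv]
      exact hdW s (Set.mem_Ici.mpr (le_of_lt hs))
  have hmom : ∑ j ∈ Icc 1 k, (j:ℝ) * ξ j t ≤ M :=
    le_trans (hWanti (Set.self_mem_Ici) ht ht) hM0
  -- individual bounds
  have hsingle : ∀ j ∈ Icc 1 k, (j:ℝ) * ξ j t ≤ M := by
    intro j hj
    refine le_trans (Finset.single_le_sum (f := fun (j : ℕ) => (j:ℝ) * ξ j t) ?_ hj) hmom
    intro p hp
    exact mul_nonneg (by positivity) (hξnn p hp t ht)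
  have hxi_le : ∀ j ∈ Icc 1 k, ξ j t ≤ M := by
    intro j hj
    have h1 : (1:ℝ) ≤ j := by
      simp only [mem_Icc] at hj; exact_mod_cast hj.1
    have h2 := hξnn j hj t ht
    nlinarith [hsingle j hj]
  -- bound the three terms of d i t
  rw [heq i hik' t ht]
  set X := ξ (i-1) t * ∑ j ∈ Icc 1 (i-1), (j:ℝ) * γ (i-1) j * ξ j t with hXdef
  set Y := ξ i t * ∑ j ∈ Icc 1 i, (j:ℝ) * γ i j * ξ j t with hYdef
  set Z := ∑ j ∈ Icc i k, γ i j * ξ i t * ξ j t with hZdef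
  have hXnn : 0 ≤ X := by
    rcases Nat.lt_or_ge i 2 with h2 | h2
    · have : i = 1 := by omega
      simp [hXdef, this]
    · have him : i - 1 ∈ Icc 1 k := mem_Icc.mpr ⟨by omega, by omega⟩
      apply mul_nonneg (hξnn _ him t ht)
      apply Finset.sum_nonneg
      intro j hj
      simp only [mem_Icc] at hj
      exact mul_nonneg (mul_nonneg (by positivity) (hγ0 _ _))
        (hξnn j (mem_Icc.mpr ⟨hj.1, by omega⟩) t ht)
  have hXb : X ≤ 2 * A * i * M ^ 2 := by
    rcases Nat.lt_or_ge i 2 with h2 | h2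
    · have : i = 1 := by omega
      simp only [hXdef, this]
      simp
      positivity
    · have him : i - 1 ∈ Icc 1 k := mem_Icc.mpr ⟨by omega, by omega⟩
      have hs := sum_bound A M hA hM (i-1) k (i-1) (by omega) (by omega) γ hγ0 hγA
        (fun j => ξ j t) (fun j hj => hξnn j hj t ht) hmom
      have hx1 : ξ (i-1) t ≤ M := hxi_le _ him
      have hx0 : 0 ≤ ξ (i-1) t := hξnn _ him t ht
      have hss : A * (((i:ℝ)-1) + ((i:ℝ)-1)) * M ≤ 2 * A * i * M := by
        have h1i : (1:ℝ) ≤ (i:ℝ) := by exact_mod_cast hi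
        nlinarith
      have hcast : ((i-1 : ℕ):ℝ) = (i:ℝ) - 1 := by
        have : (1:ℕ) ≤ i := hi
        push_cast [Nat.cast_sub this]
        ring
      rw [hcast] at hs
      have hsnn : 0 ≤ ∑ j ∈ Icc 1 (i-1), (j:ℝ) * γ (i-1) j * ξ j t := by
        apply Finset.sum_nonneg
        intro j hj
        simp only [mem_Icc] at hj
        exact mul_nonneg (mul_nonneg (by positivity) (hγ0 _ _))
          (hξnn j (mem_Icc.mpr ⟨hj.1, by omega⟩) t ht)
      calc X ≤ M * (2 * A * i * M) := by
            apply mul_le_mul hx1 (le_trans hs hss) hsnn hM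
        _ = 2 * A * i * M ^ 2 := by ring
  have hYnn : 0 ≤ Y := by
    apply mul_nonneg (hξnn i hik' t ht)
    apply Finset.sum_nonneg
    intro j hj
    simp only [mem_Icc] at hj
    exact mul_nonneg (mul_nonneg (by positivity) (hγ0 _ _))
      (hξnn j (mem_Icc.mpr ⟨hj.1, by omega⟩) t ht)
  have hYb : Y ≤ 2 * A * i * M ^ 2 := by
    have hs := sum_bound A M hA hM i k i hik hi γ hγ0 hγA
      (fun j => ξ j t) (fun j hj => hξnn j hj t ht) hmom
    have hx1 : ξ i t ≤ M := hxi_le _ hik'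
    have hx0 : 0 ≤ ξ i t := hξnn _ hik' t ht
    have hsnn : 0 ≤ ∑ j ∈ Icc 1 i, (j:ℝ) * γ i j * ξ j t := by
      apply Finset.sum_nonneg
      intro j hj
      simp only [mem_Icc] at hj
      exact mul_nonneg (mul_nonneg (by positivity) (hγ0 _ _))
        (hξnn j (mem_Icc.mpr ⟨hj.1, by omega⟩) t ht)
    calc Y ≤ M * (A * ((i:ℝ) + i) * M) := by
          apply mul_le_mul hx1 hs hsnn hM
      _ = 2 * A * i * M ^ 2 := by ring
  have hZnn : 0 ≤ Z := by
    apply Finset.sum_nonneg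
    intro j hj
    simp only [mem_Icc] at hj
    exact mul_nonneg (mul_nonneg (hγ0 _ _) (hξnn i hik' t ht))
      (hξnn j (mem_Icc.mpr ⟨by omega, hj.2⟩) t ht)
  have hZb : Z ≤ A * ((i:ℝ) + 1) * M ^ 2 := by
    have hx1 : ξ i t ≤ M := hxi_le _ hik'
    have hx0 : 0 ≤ ξ i t := hξnn _ hik' t ht
    calc Z ≤ ∑ j ∈ Icc i k, A * ((i:ℝ) + 1) * ξ i t * ((j:ℝ) * ξ j t) := by
          apply Finset.sum_le_sum
          intro j hj
          simp only [mem_Icc] at hj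
          have hj1 : 1 ≤ j := by omega
          have hjk : j ∈ Icc 1 k := mem_Icc.mpr ⟨hj1, hj.2⟩
          have hxj : 0 ≤ ξ j t := hξnn j hjk t ht
          have h1 : γ i j ≤ A * ((i:ℝ) + j) := hγA i j hi hj1
          have h2 : (i:ℝ) + j ≤ ((i:ℝ) + 1) * j := by
            have : (1:ℝ) ≤ j := by exact_mod_cast hj1
            have h1i : (1:ℝ) ≤ (i:ℝ) := by exact_mod_cast hi
            nlinarith
          calc γ i j * ξ i t * ξ j t ≤ A * ((i:ℝ) + j) * ξ i t * ξ j t :=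
                mul_le_mul_of_nonneg_right (mul_le_mul_of_nonneg_right h1 hx0) hxj
            _ ≤ A * ((i:ℝ) + 1) * ξ i t * ((j:ℝ) * ξ j t) := by
                have h3 := mul_le_mul_of_nonneg_right (mul_le_mul_of_nonneg_left h2 hA.le)
                  (mul_nonneg hx0 hxj)
                nlinarith [h3]
      _ = A * ((i:ℝ) + 1) * ξ i t * ∑ j ∈ Icc i k, (j:ℝ) * ξ j t := by
          rw [Finset.mul_sum]
      _ ≤ A * ((i:ℝ) + 1) * M * M := by
          have hsub : ∑ j ∈ Icc i k, (j:ℝ) * ξ j t ≤ M := by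
            refine le_trans (Finset.sum_le_sum_of_subset_of_nonneg
              (Finset.Icc_subset_Icc_left hi) ?_) hmom
            intro j hj _
            exact mul_nonneg (by positivity) (hξnn j hj t ht)
          have hsubnn : 0 ≤ ∑ j ∈ Icc i k, (j:ℝ) * ξ j t := by
            apply Finset.sum_nonneg
            intro j hj
            simp only [mem_Icc] at hj
            exact mul_nonneg (by positivity)
              (hξnn j (mem_Icc.mpr ⟨by omega, hj.2⟩) t ht)
          have h5 : ξ i t * (∑ j ∈ Icc i k, (j:ℝ) * ξ j t) ≤ M * M :=
            mul_le_mul hx1 hsub hsubnn hM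
          have h6 : (0:ℝ) ≤ A * ((i:ℝ) + 1) := by positivity
          nlinarith [mul_le_mul_of_nonneg_left h5 h6]
      _ = A * ((i:ℝ) + 1) * M ^ 2 := by ring
  rw [abs_le]
  have hi1 : (1:ℝ) ≤ i := by exact_mod_cast hi
  constructor <;> nlinarith
end

section
/- Let ν be a measure on ℕ with Σ_{i≥1} i ν({i}) < ∞. Then there exists a function G : [0,∞) → [0,∞), convex, C¹, with G(0)=0, G'(0) ≥ 0, G' concave, and lim_{ζ→∞} G(ζ)/ζ = +∞, such that Σ_{i≥1} G(i) ν({i}) < ∞. -/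
open Set MeasureTheory Filter
open scoped ENNReal

namespace DLVP6

noncomputable def Nseq (M : ℕ → ℕ) : ℕ → ℕ
  | 0 => max 1 (M 0)
  | k + 1 => max (2 * Nseq M k) (M (k + 1))

variable {M : ℕ → ℕ}

lemma Nseq_one_le (k : ℕ) : 1 ≤ Nseq M k := by
  induction k with
  | zero => exact le_max_left _ _
  | succ k ih => exact le_trans (by omega) (le_max_left (2 * Nseq M k) _)

lemma Nseq_two_mul (k : ℕ) : 2 * Nseq M k ≤ Nseq M (k + 1) := le_max_left _ _

lemma M_le_Nseq (k : ℕ) : M k ≤ Nseq M k := by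
  cases k with
  | zero => exact le_max_right _ _
  | succ k => exact le_max_right _ _

lemma Nseq_strictMono : StrictMono (Nseq M) :=
  strictMono_nat_of_lt_succ fun k =>
    lt_of_lt_of_le (by have := Nseq_one_le (M := M) k; omega) (Nseq_two_mul k)

lemma two_pow_le_Nseq (k : ℕ) : 2 ^ k ≤ Nseq M k := by
  induction k with
  | zero => exact Nseq_one_le 0
  | succ k ih => calc 2 ^ (k+1) = 2 * 2 ^ k := by ring
    _ ≤ 2 * Nseq M k := by omega
    _ ≤ Nseq M (k+1) := Nseq_two_mul k

lemma Nseq_shift (K j : ℕ) : 2 ^ j * Nseq M K ≤ Nseq M (K + j) := by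
  induction j with
  | zero => simp
  | succ j ih => calc 2 ^ (j+1) * Nseq M K = 2 * (2 ^ j * Nseq M K) := by ring
    _ ≤ 2 * Nseq M (K + j) := by omega
    _ ≤ Nseq M (K + j + 1) := Nseq_two_mul _

lemma Nseq_pos_real (k : ℕ) : (0:ℝ) < (Nseq M k : ℝ) := by
  exact_mod_cast lt_of_lt_of_le one_pos (Nseq_one_le k)

noncomputable def gfun (M : ℕ → ℕ) (x : ℝ) : ℝ := ∑' k, min (x / (Nseq M k : ℝ)) 1

lemma term_abs_le (x : ℝ) (k : ℕ) :
    |min (x / (Nseq M k : ℝ)) 1| ≤ |x| * (1/2) ^ k := by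
  have hN : (0:ℝ) < (Nseq M k : ℝ) := Nseq_pos_real k
  have h2 : (2:ℝ) ^ k ≤ (Nseq M k : ℝ) := by exact_mod_cast two_pow_le_Nseq (M := M) k
  have h1 : |min (x / (Nseq M k : ℝ)) 1| ≤ |x| / (Nseq M k : ℝ) := by
    rcases le_or_gt (x / (Nseq M k : ℝ)) 1 with h | h
    · rw [min_eq_left h, abs_div, abs_of_pos hN]
    · rw [min_eq_right h.le, abs_one]
      have hx : (0:ℝ) < x / (Nseq M k : ℝ) := lt_trans one_pos h
      calc (1:ℝ) ≤ x / (Nseq M k : ℝ) := h.le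
        _ ≤ |x| / (Nseq M k : ℝ) := by gcongr; exact le_abs_self x
  refine h1.trans ?_
  calc |x| / (Nseq M k : ℝ) ≤ |x| / (2:ℝ)^k := by
        gcongr
    _ = |x| * (1/2)^k := by rw [div_eq_mul_inv, one_div, inv_pow]


lemma summable_term (x : ℝ) : Summable (fun k => min (x / (Nseq M k : ℝ)) 1) := by
  apply Summable.of_abs
  apply Summable.of_nonneg_of_le (fun k => abs_nonneg _) (term_abs_le x)
  exact (summable_geometric_of_lt_one (by norm_num) (by norm_num)).mul_left _

lemma gfun_mono : Monotone (gfun M) := by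
  intro x y hxy
  apply Summable.tsum_le_tsum _ (summable_term x) (summable_term y)
  intro k
  exact min_le_min (by gcongr) le_rfl

lemma gfun_nonneg {x : ℝ} (hx : 0 ≤ x) : 0 ≤ gfun M x :=
  tsum_nonneg fun k => le_min (by positivity) zero_le_one

lemma gfun_zero : gfun M 0 = 0 := by
  simp [gfun]

lemma gfun_concave : ConcaveOn ℝ univ (gfun M) := by
  refine ⟨convex_univ, ?_⟩
  intro x _ y _ a b ha hb hab
  simp only [smul_eq_mul]
  have hsx := summable_term (M := M) x
  have hsy := summable_term (M := M) y
  calc a * gfun M x + b * gfun M y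
      = ∑' k, (a * min (x / (Nseq M k : ℝ)) 1 + b * min (y / (Nseq M k : ℝ)) 1) := by
        rw [Summable.tsum_add (hsx.mul_left a) (hsy.mul_left b), tsum_mul_left, tsum_mul_left]; rfl
    _ ≤ gfun M (a • x + b • y) := by
        apply Summable.tsum_le_tsum _ ((hsx.mul_left a).add (hsy.mul_left b)) (summable_term _)
        intro k
        have hN := Nseq_pos_real (M := M) k
        refine le_min ?_ ?_
        · have h1 : a * min (x / (Nseq M k : ℝ)) 1 ≤ a * (x / (Nseq M k : ℝ)) :=
            mul_le_mul_of_nonneg_left (min_le_left _ _) ha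
          have h2 : b * min (y / (Nseq M k : ℝ)) 1 ≤ b * (y / (Nseq M k : ℝ)) :=
            mul_le_mul_of_nonneg_left (min_le_left _ _) hb
          calc a * min (x / (Nseq M k : ℝ)) 1 + b * min (y / (Nseq M k : ℝ)) 1
              ≤ a * (x / (Nseq M k : ℝ)) + b * (y / (Nseq M k : ℝ)) := add_le_add h1 h2
            _ = (a • x + b • y) / (Nseq M k : ℝ) := by simp [smul_eq_mul]; ring
        · have h1 : a * min (x / (Nseq M k : ℝ)) 1 ≤ a * 1 :=
            mul_le_mul_of_nonneg_left (min_le_right _ _) ha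
          have h2 : b * min (y / (Nseq M k : ℝ)) 1 ≤ b * 1 :=
            mul_le_mul_of_nonneg_left (min_le_right _ _) hb
          calc a * min (x / (Nseq M k : ℝ)) 1 + b * min (y / (Nseq M k : ℝ)) 1
              ≤ a * 1 + b * 1 := add_le_add h1 h2
            _ = 1 := by rw [mul_one, mul_one, hab]

lemma gfun_continuous : Continuous (gfun M) := by
  rw [continuous_iff_continuousAt]
  intro x
  have hmem : x ∈ Metric.ball (0:ℝ) (|x| + 1) := by
    simpa [Metric.mem_ball, Real.dist_eq] using lt_add_one |x|
  have hball : Metric.ball (0:ℝ) (|x| + 1) ∈ nhds x :=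
    Metric.isOpen_ball.mem_nhds hmem
  apply ContinuousWithinAt.continuousAt _ hball
  apply ContinuousOn.continuousWithinAt _ hmem
  apply continuousOn_tsum (u := fun k => (|x| + 1) * (1/2)^k)
  · intro k
    exact ((continuous_id.div_const _).min continuous_const).continuousOn
  · exact (summable_geometric_of_lt_one (by norm_num) (by norm_num)).mul_left _
  · intro k y hy
    rw [Real.norm_eq_abs]
    refine (term_abs_le y k).trans ?_
    have : |y| ≤ |x| + 1 := by
      simp [Metric.mem_ball, Real.dist_eq] at hy
      linarith [le_abs_self (y), neg_abs_le y]
    gcongr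

lemma gfun_tendsto : Tendsto (gfun M) atTop atTop := by
  rw [tendsto_atTop]
  intro C
  set K := ⌈C⌉₊ with hK
  filter_upwards [eventually_ge_atTop ((Nseq M K : ℝ))] with x hx
  have hx0 : (0:ℝ) ≤ x := le_trans (Nseq_pos_real K).le hx
  have h1 : (K : ℝ) ≤ gfun M x := by
    have : ∀ k ∈ Finset.range K, min (x / (Nseq M k : ℝ)) 1 = 1 := by
      intro k hk
      rw [min_eq_right]
      rw [le_div_iff₀ (Nseq_pos_real k)]
      rw [one_mul]
      calc (Nseq M k : ℝ) ≤ (Nseq M K : ℝ) := by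
            exact_mod_cast (Nseq_strictMono.monotone (Finset.mem_range.1 hk).le)
        _ ≤ x := hx
    calc (K : ℝ) = ∑ k ∈ Finset.range K, min (x / (Nseq M k : ℝ)) 1 := by
          rw [Finset.sum_congr rfl this]; simp
      _ ≤ gfun M x := by
          apply Summable.sum_le_tsum _ _ (summable_term x)
          intro k _
          exact le_min (by positivity) zero_le_one
  exact le_trans (Nat.le_ceil C) h1

noncomputable def Gfun (M : ℕ → ℕ) (x : ℝ) : ℝ := ∫ t in (0:ℝ)..x, gfun M t

lemma Gfun_hasDerivAt (b : ℝ) : HasDerivAt (Gfun M) (gfun M b) b := by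
  apply intervalIntegral.integral_hasDerivAt_right
  · exact (gfun_continuous).intervalIntegrable _ _
  · exact (gfun_continuous).aestronglyMeasurable.stronglyMeasurableAtFilter
  · exact (gfun_continuous).continuousAt

lemma Gfun_deriv : deriv (Gfun M) = gfun M :=
  funext fun b => (Gfun_hasDerivAt b).deriv

end DLVP6
open Set MeasureTheory Filter
open scoped ENNReal
open DLVP6
theorem stmt_6 (ν : Measure ℕ)
    (hν : ∑' i : ℕ, (i : ENNReal) * ν {i} ≠ ⊤) :
    ∃ G : ℝ → ℝ,
      (∀ x ∈ Ici (0:ℝ), 0 ≤ G x) ∧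
      ConvexOn ℝ (Ici (0:ℝ)) G ∧
      DifferentiableOn ℝ G (Ici (0:ℝ)) ∧
      G 0 = 0 ∧
      0 ≤ deriv G 0 ∧
      ConcaveOn ℝ (Ici (0:ℝ)) (deriv G) ∧
      Tendsto (fun ζ : ℝ => G ζ / ζ) atTop atTop ∧
      ∑' i : ℕ, ENNReal.ofReal (G i) * ν {i} ≠ ⊤ := by
  classical
  set f : ℕ → ℝ≥0∞ := fun i => (i : ℝ≥0∞) * ν {i} with hf
  set T : ℕ → ℝ≥0∞ := fun n => ∑' i, if n ≤ i then f i else 0 with hT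
  have hT_eq : ∀ n, T n = ∑' j, f (j + n) := by
    intro n
    have hinj : Function.Injective (fun j : ℕ => j + n) := add_left_injective n
    have h := hinj.tsum_eq (f := fun i => if n ≤ i then f i else 0)
      (fun x hx => by
        simp only [Function.mem_support] at hx
        rcases le_or_gt n x with hle | hlt
        · exact ⟨x - n, show x - n + n = x by omega⟩
        · exact absurd (if_neg (by omega)) hx)
    rw [hT]
    exact ((tsum_congr (fun j => (if_pos (Nat.le_add_left n j)).symm)).trans h).symm
  have hT0 : Tendsto T atTop (nhds 0) := by
    have he : T = fun n => ∑' j, f (j + n) := funext hT_eq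
    rw [he]
    exact ENNReal.tendsto_sum_nat_add f hν
  have hT_anti : ∀ {m n : ℕ}, m ≤ n → T n ≤ T m := by
    intro m n hmn
    rw [hT]
    apply ENNReal.tsum_le_tsum
    intro i
    by_cases h : n ≤ i
    · rw [if_pos h, if_pos (le_trans hmn h)]
    · rw [if_neg h]; exact zero_le
  have hM : ∀ k : ℕ, ∃ n, T n ≤ 2⁻¹ ^ k := by
    intro k
    have hpos : (0:ℝ≥0∞) < 2⁻¹ ^ k :=
      ENNReal.pow_pos (ENNReal.inv_pos.mpr ENNReal.ofNat_ne_top) k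
    obtain ⟨n, hn⟩ := (hT0.eventually_lt_const hpos).exists
    exact ⟨n, hn.le⟩
  set M : ℕ → ℕ := fun k => (hM k).choose with hMdef
  have hMk : ∀ k, T (M k) ≤ 2⁻¹ ^ k := fun k => (hM k).choose_spec
  have hTN : ∀ k, T (Nseq M k) ≤ 2⁻¹ ^ k :=
    fun k => le_trans (hT_anti (M_le_Nseq k)) (hMk k)
  have hex : ∀ i : ℕ, ∃ K, i < Nseq M K :=
    fun i => ⟨i, lt_of_lt_of_le (Nat.lt_two_pow_self) (two_pow_le_Nseq i)⟩
  set k0 : ℕ → ℕ := fun i => Nat.find (hex i) with hk0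
  have hk0_spec : ∀ i, i < Nseq M (k0 i) := fun i => Nat.find_spec (hex i)
  have hk0_lt : ∀ i k, k < k0 i → Nseq M k ≤ i := by
    intro i k hk
    have := Nat.find_min (hex i) hk
    omega
  have hk0_le : ∀ i k, Nseq M k ≤ i → k < k0 i := by
    intro i k h
    by_contra hc
    push_neg at hc
    have h2 : Nseq M (k0 i) ≤ Nseq M k := Nseq_strictMono.monotone hc
    have := hk0_spec i
    omega
  -- bound on g at naturals
  have hgb : ∀ i : ℕ, gfun M i ≤ (k0 i : ℝ) + 2 := by
    intro i
    have hiK : (i:ℝ) ≤ (Nseq M (k0 i) : ℝ) := by exact_mod_cast (hk0_spec i).le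
    set u : ℕ → ℝ := fun k => if k < k0 i then 1 else (1/2)^(k - k0 i) with hu
    have hterm : ∀ k, min ((i:ℝ) / (Nseq M k : ℝ)) 1 ≤ u k := by
      intro k
      by_cases hk : k < k0 i
      · simp only [hu]; rw [if_pos hk]; exact min_le_right _ _
      · have hk' : k0 i ≤ k := not_lt.1 hk
        have h2 : (2:ℝ)^(k - k0 i) * (Nseq M (k0 i) : ℝ) ≤ (Nseq M k : ℝ) := by
          have h3 := Nseq_shift (M := M) (k0 i) (k - k0 i)
          rw [Nat.add_sub_cancel' hk'] at h3
          exact_mod_cast h3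
        have hpos : (0:ℝ) < (Nseq M (k0 i) : ℝ) := Nseq_pos_real _
        have hpos2 : (0:ℝ) < (2:ℝ)^(k - k0 i) * (Nseq M (k0 i):ℝ) := by positivity
        simp only [hu]; rw [if_neg hk]
        refine (min_le_left _ _).trans ?_
        calc (i:ℝ) / (Nseq M k : ℝ)
            ≤ (Nseq M (k0 i) : ℝ) / ((2:ℝ)^(k - k0 i) * (Nseq M (k0 i):ℝ)) :=
              div_le_div₀ (by positivity) hiK hpos2 h2
          _ = (1/2)^(k - k0 i) := by
              rw [div_eq_iff hpos2.ne']
              rw [div_pow, one_pow]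
              field_simp
    have hu_shift : ∀ j, u (j + k0 i) = (1/2:ℝ)^j := by
      intro j
      simp only [hu]
      rw [if_neg (by omega)]
      congr 1
      omega
    have hu_sum : Summable u := by
      rw [← summable_nat_add_iff (k0 i)]
      simp only [hu_shift]
      exact summable_geometric_of_lt_one (by norm_num) (by norm_num)
    calc gfun M i ≤ ∑' k, u k := Summable.tsum_le_tsum hterm (summable_term _) hu_sum
      _ = (k0 i : ℝ) + 2 := by
          rw [← Summable.sum_add_tsum_nat_add (k0 i) hu_sum]
          have h1 : ∑ k ∈ Finset.range (k0 i), u k = (k0 i : ℝ) := by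
            rw [Finset.sum_congr rfl (fun k hk => by
              simp only [hu]; exact if_pos (Finset.mem_range.1 hk))]
            simp
          have h2 : ∑' j, u (j + k0 i) = 2 := by
            simp only [hu_shift]
            exact tsum_geometric_two
          rw [h1, h2]
  have hGb : ∀ i : ℕ, Gfun M i ≤ (i : ℝ) * ((k0 i : ℝ) + 2) := by
    intro i
    have hmono := intervalIntegral.integral_mono_on (μ := volume) (by positivity : (0:ℝ) ≤ (i:ℝ))
      (gfun_continuous.intervalIntegrable _ _) (intervalIntegrable_const (c := gfun M i))
      (fun t ht => gfun_mono ht.2)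
    rw [intervalIntegral.integral_const] at hmono
    calc Gfun M i ≤ ((i:ℝ) - 0) • gfun M i := hmono
      _ = (i:ℝ) * gfun M i := by rw [smul_eq_mul]; ring
      _ ≤ (i:ℝ) * ((k0 i : ℝ) + 2) :=
          mul_le_mul_of_nonneg_left (hgb i) (Nat.cast_nonneg i)
  have hNat_cast : ∀ i : ℕ, (k0 i : ℝ≥0∞) = ∑' k, if Nseq M k ≤ i then (1:ℝ≥0∞) else 0 := by
    intro i
    rw [tsum_eq_sum (s := Finset.range (k0 i)) (fun k hk => by
      rw [if_neg]
      intro hle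
      exact hk (Finset.mem_range.2 (hk0_le i k hle)))]
    rw [Finset.sum_congr rfl (fun k hk => if_pos (hk0_lt i k (Finset.mem_range.1 hk)))]
    simp
  have hmain : ∑' i : ℕ, ENNReal.ofReal (Gfun M i) * ν {i} ≤ 2 + 2 * ∑' i, f i := by
    have step1 : ∀ i : ℕ, ENNReal.ofReal (Gfun M i) * ν {i} ≤ ((k0 i : ℝ≥0∞) + 2) * f i := by
      intro i
      have h1 : ENNReal.ofReal (Gfun M i) ≤ ENNReal.ofReal ((i:ℝ) * ((k0 i:ℝ)+2)) :=
        ENNReal.ofReal_le_ofReal (hGb i)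
      have h2 : ENNReal.ofReal ((i:ℝ) * ((k0 i:ℝ)+2)) = (i:ℝ≥0∞) * ((k0 i:ℝ≥0∞)+2) := by
        rw [ENNReal.ofReal_mul (Nat.cast_nonneg i), ENNReal.ofReal_natCast,
          ENNReal.ofReal_add (Nat.cast_nonneg _) (by norm_num), ENNReal.ofReal_natCast,
          ENNReal.ofReal_ofNat]
      calc ENNReal.ofReal (Gfun M i) * ν {i} ≤ ((i:ℝ≥0∞) * ((k0 i:ℝ≥0∞)+2)) * ν {i} :=
            mul_le_mul_left (h1.trans_eq h2) _
        _ = ((k0 i:ℝ≥0∞)+2) * f i := by rw [hf]; ring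
    have hk0f : ∑' i, (k0 i : ℝ≥0∞) * f i ≤ 2 := by
      have heq : ∑' i, (k0 i : ℝ≥0∞) * f i = ∑' k, T (Nseq M k) := by
        calc ∑' i, (k0 i : ℝ≥0∞) * f i
            = ∑' i, ∑' k, ((if Nseq M k ≤ i then (1:ℝ≥0∞) else 0) * f i) := by
              refine tsum_congr fun i => ?_
              rw [hNat_cast i, ← ENNReal.tsum_mul_right]
          _ = ∑' k, ∑' i, ((if Nseq M k ≤ i then (1:ℝ≥0∞) else 0) * f i) := ENNReal.tsum_comm
          _ = ∑' k, T (Nseq M k) := by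
              refine tsum_congr fun k => ?_
              rw [hT]
              refine tsum_congr fun i => ?_
              by_cases h : Nseq M k ≤ i <;> simp [h]
      rw [heq]
      calc ∑' k, T (Nseq M k) ≤ ∑' k : ℕ, (2⁻¹:ℝ≥0∞) ^ k := ENNReal.tsum_le_tsum hTN
        _ = 2 := by
            rw [ENNReal.tsum_geometric, ENNReal.one_sub_inv_two, inv_inv]
    calc ∑' i : ℕ, ENNReal.ofReal (Gfun M i) * ν {i}
        ≤ ∑' i, ((k0 i : ℝ≥0∞) + 2) * f i := ENNReal.tsum_le_tsum step1
      _ = (∑' i, (k0 i : ℝ≥0∞) * f i) + 2 * ∑' i, f i := by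
          rw [← ENNReal.tsum_mul_left, ← ENNReal.tsum_add]
          refine tsum_congr fun i => ?_
          ring
      _ ≤ 2 + 2 * ∑' i, f i := add_le_add_left hk0f _
  have hdiff : Differentiable ℝ (Gfun M) := fun b => (Gfun_hasDerivAt b).differentiableAt
  refine ⟨Gfun M, ?_, ?_, ?_, ?_, ?_, ?_, ?_, ?_⟩
  · intro x hx
    exact intervalIntegral.integral_nonneg hx (fun u hu => gfun_nonneg hu.1)
  · have hconv : ConvexOn ℝ univ (Gfun M) := by
      apply MonotoneOn.convexOn_of_deriv convex_univ hdiff.continuous.continuousOn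
        hdiff.differentiableOn
      rw [Gfun_deriv]
      exact gfun_mono.monotoneOn _
    exact hconv.subset (subset_univ _) (convex_Ici 0)
  · exact hdiff.differentiableOn
  · exact intervalIntegral.integral_same
  · rw [Gfun_deriv]
    exact le_of_eq gfun_zero.symm
  · rw [Gfun_deriv]
    exact gfun_concave.subset (subset_univ _) (convex_Ici 0)
  · have hkey : ∀ ζ : ℝ, 0 ≤ ζ → ζ / 2 * gfun M (ζ / 2) ≤ Gfun M ζ := by
      intro ζ hζ
      have hi1 : IntervalIntegrable (gfun M) volume 0 (ζ/2) :=
        gfun_continuous.intervalIntegrable _ _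
      have hi2 : IntervalIntegrable (gfun M) volume (ζ/2) ζ :=
        gfun_continuous.intervalIntegrable _ _
      have hsplit : Gfun M ζ =
          (∫ t in (0:ℝ)..(ζ/2), gfun M t) + ∫ t in (ζ/2)..ζ, gfun M t :=
        (intervalIntegral.integral_add_adjacent_intervals hi1 hi2).symm
      have h1 : 0 ≤ ∫ t in (0:ℝ)..(ζ/2), gfun M t :=
        intervalIntegral.integral_nonneg (by linarith) (fun u hu => gfun_nonneg hu.1)
      have h2 : ζ / 2 * gfun M (ζ/2) ≤ ∫ t in (ζ/2)..ζ, gfun M t := by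
        have hm := intervalIntegral.integral_mono_on (by linarith : ζ/2 ≤ ζ)
          (intervalIntegrable_const (c := gfun M (ζ/2))) hi2 (fun t ht => gfun_mono ht.1)
        rw [intervalIntegral.integral_const] at hm
        calc ζ/2 * gfun M (ζ/2) = (ζ - ζ/2) • gfun M (ζ/2) := by rw [smul_eq_mul]; ring
          _ ≤ _ := hm
      linarith
    have htt : Tendsto (fun ζ : ℝ => gfun M (ζ / 2) / 2) atTop atTop := by
      apply Tendsto.atTop_div_const two_pos
      exact gfun_tendsto.comp (Tendsto.atTop_div_const two_pos tendsto_id)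
    apply tendsto_atTop_mono' _ _ htt
    filter_upwards [eventually_gt_atTop (0:ℝ)] with ζ hζ
    rw [div_le_div_iff₀ two_pos hζ]
    nlinarith [hkey ζ hζ.le]
  · refine ne_top_of_le_ne_top ?_ hmain
    exact ENNReal.add_ne_top.2 ⟨ENNReal.ofNat_ne_top, ENNReal.mul_ne_top ENNReal.ofNat_ne_top hν⟩
end

section
/- Let ξ = (ξᵢ)_{i≥1} be a solution of the discrete Safronov–Dubovskiǐ coagulation equation on [0,T] with ξᵢ(t) ≥ 0, Σ_{i} i ξᵢ(t) < ∞, and suppose (Φᵢ)_{i≥1} has at most polynomial growth. Then for each q > 1 and t ∈ [0,T], d/dt Σ_{i=1}^{q} Φᵢ ξᵢ(t) = Σ_{i=1}^{q−1} Σ_{j=1}^{i} j Φ_{i+1} γ_{i,j} ξᵢ ξ_j − Σ_{i=1}^{q} Σ_{j=1}^{i} (j Φᵢ + Φ_j) γ_{i,j} ξᵢ ξ_j − Σ_{i=q+1}^{∞} Σ_{j=1}^{q} Φ_j γ_{i,j} ξᵢ ξ_j. -/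
open Finset

theorem stmt_8 (T : ℝ) (hT : 0 < T)
    (γ : ℕ → ℕ → ℝ) (hγ_nonneg : ∀ i j, 0 ≤ γ i j) (hγ_symm : ∀ i j, γ i j = γ j i)
    (ξ : ℕ → ℝ → ℝ) (d : ℕ → ℝ → ℝ)
    (hξ_nonneg : ∀ i : ℕ, 1 ≤ i → ∀ t ∈ Set.Icc (0:ℝ) T, 0 ≤ ξ i t)
    (hmoment : ∀ t ∈ Set.Icc (0:ℝ) T, Summable (fun i : ℕ => (i : ℝ) * ξ i t))
    (hsum_loss : ∀ i : ℕ, 1 ≤ i → ∀ t ∈ Set.Icc (0:ℝ) T,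
      Summable (fun j : ℕ => if i ≤ j then γ i j * ξ j t else 0))
    (hξ_deriv : ∀ i : ℕ, 1 ≤ i → ∀ t ∈ Set.Icc (0:ℝ) T, HasDerivAt (ξ i) (d i t) t)
    (hd : ∀ i : ℕ, 1 ≤ i → ∀ t ∈ Set.Icc (0:ℝ) T,
      d i t = ξ (i - 1) t * ∑ j ∈ Icc 1 (i - 1), (j : ℝ) * γ (i - 1) j * ξ j t
        - ξ i t * ∑ j ∈ Icc 1 i, (j : ℝ) * γ i j * ξ j t
        - ξ i t * ∑' j : ℕ, (if i ≤ j then γ i j * ξ j t else 0))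
    (Φ : ℕ → ℝ) (C : ℝ) (m : ℕ) (hΦ : ∀ i : ℕ, 1 ≤ i → |Φ i| ≤ C * (i : ℝ) ^ m)
    (q : ℕ) (hq : 1 < q)
    (htail : ∀ t ∈ Set.Icc (0:ℝ) T,
      Summable (fun i : ℕ =>
        if q + 1 ≤ i then ∑ j ∈ Icc 1 q, Φ j * γ i j * ξ i t * ξ j t else 0)) :
    ∀ t ∈ Set.Icc (0:ℝ) T,
      HasDerivAt (fun s => ∑ i ∈ Icc 1 q, Φ i * ξ i s)
        ((∑ i ∈ Icc 1 (q - 1), ∑ j ∈ Icc 1 i,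
            (j : ℝ) * Φ (i + 1) * γ i j * ξ i t * ξ j t)
          - (∑ i ∈ Icc 1 q, ∑ j ∈ Icc 1 i,
              ((j : ℝ) * Φ i + Φ j) * γ i j * ξ i t * ξ j t)
          - ∑' i : ℕ,
              (if q + 1 ≤ i then ∑ j ∈ Icc 1 q, Φ j * γ i j * ξ i t * ξ j t else 0)) t := by
  intro t ht
  have hderiv : HasDerivAt (fun s => ∑ i ∈ Icc 1 q, Φ i * ξ i s)
      (∑ i ∈ Icc 1 q, Φ i * d i t) t :=
    HasDerivAt.fun_sum fun i hi => (hξ_deriv i (mem_Icc.mp hi).1 t ht).const_mul (Φ i)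
  convert hderiv using 1
  -- summability facts
  have hfin : ∀ i : ℕ, Summable (fun j : ℕ => if j ∈ Icc i q then γ i j * ξ j t else 0) :=
    fun i => summable_of_ne_finset_zero (s := Icc i q) (fun b hb => if_neg hb)
  have htailsum : ∀ i : ℕ, 1 ≤ i → i ≤ q →
      Summable (fun j : ℕ => if q + 1 ≤ j then γ i j * ξ j t else 0) := by
    intro i hi1 hi2
    refine ((hsum_loss i hi1 t ht).sub (hfin i)).congr fun j => ?_
    simp only [mem_Icc]
    by_cases h2 : q + 1 ≤ j
    · rw [if_pos (by omega : i ≤ j), if_neg (by omega : ¬ (i ≤ j ∧ j ≤ q)), if_pos h2]; ring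
    · rw [if_neg h2]
      by_cases h3 : i ≤ j
      · rw [if_pos h3, if_pos ⟨h3, by omega⟩]; ring
      · rw [if_neg h3, if_neg (by omega : ¬ (i ≤ j ∧ j ≤ q))]; ring
  have hLsplit : ∀ i ∈ Icc 1 q,
      (∑' j : ℕ, if i ≤ j then γ i j * ξ j t else 0)
        = (∑ j ∈ Icc i q, γ i j * ξ j t)
          + ∑' j : ℕ, (if q + 1 ≤ j then γ i j * ξ j t else 0) := by
    intro i hi
    obtain ⟨hi1, hi2⟩ := mem_Icc.mp hi
    have heq : ∀ j : ℕ, (if i ≤ j then γ i j * ξ j t else 0)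
        = (if j ∈ Icc i q then γ i j * ξ j t else 0)
          + (if q + 1 ≤ j then γ i j * ξ j t else 0) := by
      intro j
      simp only [mem_Icc]
      by_cases h1 : q + 1 ≤ j
      · rw [if_pos h1, if_pos (by omega : i ≤ j), if_neg (by omega : ¬ (i ≤ j ∧ j ≤ q))]; ring
      · rw [if_neg h1, add_zero]
        by_cases h2 : i ≤ j
        · rw [if_pos h2, if_pos ⟨h2, by omega⟩]
        · rw [if_neg h2, if_neg (by omega : ¬ (i ≤ j ∧ j ≤ q))]
    calc (∑' j : ℕ, if i ≤ j then γ i j * ξ j t else 0)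
        = ∑' j : ℕ, ((if j ∈ Icc i q then γ i j * ξ j t else 0)
            + (if q + 1 ≤ j then γ i j * ξ j t else 0)) := tsum_congr heq
      _ = (∑' j : ℕ, if j ∈ Icc i q then γ i j * ξ j t else 0)
            + ∑' j : ℕ, (if q + 1 ≤ j then γ i j * ξ j t else 0) :=
          Summable.tsum_add (hfin i) (htailsum i hi1 hi2)
      _ = (∑ j ∈ Icc i q, γ i j * ξ j t)
            + ∑' j : ℕ, (if q + 1 ≤ j then γ i j * ξ j t else 0) := by
          congr 1
          rw [tsum_eq_sum (s := Icc i q) (fun b hb => if_neg hb)]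
          exact Finset.sum_congr rfl fun j hj => if_pos hj
  -- the derivative value as three sums
  have hdsum : ∑ i ∈ Icc 1 q, Φ i * d i t
      = (∑ i ∈ Icc 1 q, Φ i * (ξ (i-1) t * ∑ j ∈ Icc 1 (i-1), (j:ℝ) * γ (i-1) j * ξ j t))
      - (∑ i ∈ Icc 1 q, Φ i * (ξ i t * ∑ j ∈ Icc 1 i, (j:ℝ) * γ i j * ξ j t))
      - (∑ i ∈ Icc 1 q, Φ i * (ξ i t * ∑' j : ℕ, if i ≤ j then γ i j * ξ j t else 0)) := by
    rw [← Finset.sum_sub_distrib, ← Finset.sum_sub_distrib]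
    refine Finset.sum_congr rfl fun i hi => ?_
    rw [hd i (mem_Icc.mp hi).1 t ht]; ring
  -- term 1
  have h1 : (∑ i ∈ Icc 1 q, Φ i * (ξ (i-1) t * ∑ j ∈ Icc 1 (i-1), (j:ℝ) * γ (i-1) j * ξ j t))
      = ∑ i ∈ Icc 1 (q-1), ∑ j ∈ Icc 1 i, (j:ℝ) * Φ (i+1) * γ i j * ξ i t * ξ j t := by
    have hmap : Icc 1 q = (Icc 0 (q-1)).map (addRightEmbedding 1) := by
      rw [Finset.map_add_right_Icc]; congr 1; omega
    rw [hmap, Finset.sum_map]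
    simp only [addRightEmbedding_apply, Nat.add_sub_cancel]
    have hzero : ∀ x ∈ Icc 0 (q-1), x ∉ Icc 1 (q-1) →
        Φ (x+1) * (ξ x t * ∑ j ∈ Icc 1 x, (j:ℝ) * γ x j * ξ j t) = 0 := by
      intro x hx hx'
      have hx0 : x = 0 := by
        simp only [mem_Icc] at hx hx'; omega
      subst hx0
      rw [show Icc 1 0 = (∅ : Finset ℕ) from Finset.Icc_eq_empty (by omega)]
      simp
    rw [← Finset.sum_subset (Finset.Icc_subset_Icc_left (Nat.zero_le 1)) hzero]
    refine Finset.sum_congr rfl fun i _ => ?_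
    simp only [Finset.mul_sum]
    exact Finset.sum_congr rfl fun j _ => by ring
  -- term 2 (the big middle double sum)
  have hB3 : (∑ i ∈ Icc 1 q, ∑ j ∈ Icc 1 i, Φ j * γ i j * ξ i t * ξ j t)
      = ∑ i ∈ Icc 1 q, Φ i * ξ i t * ∑ j ∈ Icc i q, γ i j * ξ j t := by
    calc (∑ i ∈ Icc 1 q, ∑ j ∈ Icc 1 i, Φ j * γ i j * ξ i t * ξ j t)
        = ∑ j ∈ Icc 1 q, ∑ i ∈ Icc j q, Φ j * γ i j * ξ i t * ξ j t :=
          Finset.sum_comm' (fun x y => by simp only [mem_Icc]; omega)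
      _ = ∑ i ∈ Icc 1 q, Φ i * ξ i t * ∑ j ∈ Icc i q, γ i j * ξ j t := by
          refine Finset.sum_congr rfl fun i _ => ?_
          rw [Finset.mul_sum]
          refine Finset.sum_congr rfl fun j _ => ?_
          rw [hγ_symm j i]; ring
  have hBfull : (∑ i ∈ Icc 1 q, ∑ j ∈ Icc 1 i, ((j:ℝ) * Φ i + Φ j) * γ i j * ξ i t * ξ j t)
      = (∑ i ∈ Icc 1 q, Φ i * (ξ i t * ∑ j ∈ Icc 1 i, (j:ℝ) * γ i j * ξ j t))
        + ∑ i ∈ Icc 1 q, Φ i * ξ i t * ∑ j ∈ Icc i q, γ i j * ξ j t := by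
    rw [← hB3, ← Finset.sum_add_distrib]
    refine Finset.sum_congr rfl fun i _ => ?_
    simp only [Finset.mul_sum]
    rw [← Finset.sum_add_distrib]
    refine Finset.sum_congr rfl fun j _ => ?_
    ring
  -- term 3 split
  have h3 : (∑ i ∈ Icc 1 q, Φ i * (ξ i t * ∑' j : ℕ, if i ≤ j then γ i j * ξ j t else 0))
      = (∑ i ∈ Icc 1 q, Φ i * ξ i t * ∑ j ∈ Icc i q, γ i j * ξ j t)
        + ∑ i ∈ Icc 1 q, Φ i * ξ i t * ∑' j : ℕ, (if q + 1 ≤ j then γ i j * ξ j t else 0) := by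
    rw [← Finset.sum_add_distrib]
    refine Finset.sum_congr rfl fun i hi => ?_
    rw [hLsplit i hi]; ring
  -- tail identification
  have htl : (∑ i ∈ Icc 1 q, Φ i * ξ i t * ∑' j : ℕ, (if q + 1 ≤ j then γ i j * ξ j t else 0))
      = ∑' i : ℕ, (if q + 1 ≤ i then ∑ j ∈ Icc 1 q, Φ j * γ i j * ξ i t * ξ j t else 0) := by
    have step1 : ∀ i ∈ Icc 1 q,
        Φ i * ξ i t * ∑' j : ℕ, (if q + 1 ≤ j then γ i j * ξ j t else 0)
        = ∑' j : ℕ, (if q + 1 ≤ j then Φ i * γ i j * ξ i t * ξ j t else 0) := by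
      intro i _
      rw [← tsum_mul_left]
      refine tsum_congr fun j => ?_
      split_ifs <;> ring
    have hsummand : ∀ i ∈ Icc 1 q,
        Summable (fun j : ℕ => if q + 1 ≤ j then Φ i * γ i j * ξ i t * ξ j t else 0) := by
      intro i hi
      obtain ⟨hi1, hi2⟩ := mem_Icc.mp hi
      refine ((htailsum i hi1 hi2).mul_left (Φ i * ξ i t)).congr fun j => ?_
      split_ifs <;> ring
    rw [Finset.sum_congr rfl step1, ← Summable.tsum_finsetSum hsummand]
    refine tsum_congr fun j => ?_
    by_cases h : q + 1 ≤ j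
    · simp only [if_pos h]
      refine Finset.sum_congr rfl fun k _ => ?_
      rw [hγ_symm j k]; ring
    · simp [h]
  rw [hdsum, h1, hBfull, h3, htl]
  ring
end

section
/- Let ξ be a nonnegative solution of the discrete Safronov–Dubovskiǐ coagulation equation with finite first moment and symmetric nonnegative kernel. Then for each q ≥ 1 the partial number of clusters f_q(t) = Σ_{i=1}^{q} ξᵢ(t) satisfies d f_q/dt ≤ −(1/2) Σ_{i=1}^{q} Σ_{j=1}^{q} γ_{i,j} ξᵢ(t) ξ_j(t) ≤ 0; in particular f_q is nonincreasing in t. -/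
open Finset

theorem stmt_9
    (γ : ℕ → ℕ → ℝ) (hγ_nonneg : ∀ i j, 0 ≤ γ i j) (hγ_symm : ∀ i j, γ i j = γ j i)
    (ξ : ℕ → ℝ → ℝ) (d : ℕ → ℝ → ℝ)
    (hξ_nonneg : ∀ i : ℕ, 1 ≤ i → ∀ t ∈ Set.Ici (0:ℝ), 0 ≤ ξ i t)
    (hmoment : ∀ t ∈ Set.Ici (0:ℝ), Summable (fun i : ℕ => (i : ℝ) * ξ i t))
    (hsum_loss : ∀ i : ℕ, 1 ≤ i → ∀ t ∈ Set.Ici (0:ℝ),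
      Summable (fun j : ℕ => if i ≤ j then γ i j * ξ j t else 0))
    (hξ_deriv : ∀ i : ℕ, 1 ≤ i → ∀ t ∈ Set.Ici (0:ℝ), HasDerivAt (ξ i) (d i t) t)
    (hd : ∀ i : ℕ, 1 ≤ i → ∀ t ∈ Set.Ici (0:ℝ),
      d i t = ξ (i - 1) t * ∑ j ∈ Icc 1 (i - 1), (j : ℝ) * γ (i - 1) j * ξ j t
        - ξ i t * ∑ j ∈ Icc 1 i, (j : ℝ) * γ i j * ξ j t
        - ξ i t * ∑' j : ℕ, (if i ≤ j then γ i j * ξ j t else 0))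
    (q : ℕ) (hq : 1 ≤ q) :
    (∀ t ∈ Set.Ici (0:ℝ),
      ∑ i ∈ Icc 1 q, d i t ≤
        -(1 / 2) * ∑ i ∈ Icc 1 q, ∑ j ∈ Icc 1 q, γ i j * ξ i t * ξ j t ∧
      -(1 / 2) * ∑ i ∈ Icc 1 q, ∑ j ∈ Icc 1 q, γ i j * ξ i t * ξ j t ≤ 0) ∧
    AntitoneOn (fun t => ∑ i ∈ Icc 1 q, ξ i t) (Set.Ici (0:ℝ)) := by
  have key : ∀ t ∈ Set.Ici (0:ℝ),
      ∑ i ∈ Icc 1 q, d i t ≤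
        -(1 / 2) * ∑ i ∈ Icc 1 q, ∑ j ∈ Icc 1 q, γ i j * ξ i t * ξ j t ∧
      -(1 / 2) * ∑ i ∈ Icc 1 q, ∑ j ∈ Icc 1 q, γ i j * ξ i t * ξ j t ≤ 0 := by
    intro t ht
    have hxnn : ∀ i : ℕ, 1 ≤ i → 0 ≤ ξ i t := fun i hi => hξ_nonneg i hi t ht
    have hFnn : ∀ i j : ℕ, 1 ≤ i → 1 ≤ j → 0 ≤ γ i j * ξ i t * ξ j t := fun i j hi hj =>
      mul_nonneg (mul_nonneg (hγ_nonneg i j) (hxnn i hi)) (hxnn j hj)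
    set A : ℕ → ℝ := fun i => ξ i t * ∑ j ∈ Icc 1 i, (j : ℝ) * γ i j * ξ j t with hA
    -- telescoping
    have hA0 : A 0 = 0 := by simp [hA]
    have htel : ∑ i ∈ Icc 1 q, (A (i - 1) - A i) = -A q := by
      have h1 : ∑ i ∈ Icc 1 q, (A (i - 1) - A i)
          = ∑ i ∈ Finset.range q, (A i - A (i + 1)) := by
        rw [← Finset.Ico_add_one_right_eq_Icc, Finset.sum_Ico_eq_sum_range]
        simp [Nat.add_sub_cancel, Nat.add_comm 1]
      rw [h1, Finset.sum_range_sub', hA0]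
      ring
    -- sum of derivatives
    have hdsum : ∑ i ∈ Icc 1 q, d i t
        = -A q - ∑ i ∈ Icc 1 q, ξ i t * ∑' j : ℕ, (if i ≤ j then γ i j * ξ j t else 0) := by
      have h1 : ∑ i ∈ Icc 1 q, d i t = ∑ i ∈ Icc 1 q,
          ((A (i - 1) - A i) - ξ i t * ∑' j : ℕ, (if i ≤ j then γ i j * ξ j t else 0)) := by
        refine Finset.sum_congr rfl fun i hi => ?_
        rw [hd i (mem_Icc.mp hi).1 t ht]
      rw [h1, Finset.sum_sub_distrib, htel]
    -- tsum lower bound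
    have hTbound : ∀ i ∈ Icc 1 q,
        ∑ j ∈ Icc 1 q, (if i ≤ j then γ i j * ξ i t * ξ j t else 0)
          ≤ ξ i t * ∑' j : ℕ, (if i ≤ j then γ i j * ξ j t else 0) := by
      intro i hi
      obtain ⟨hi1, hiq⟩ := mem_Icc.mp hi
      have hg : ∀ j : ℕ, 0 ≤ (if i ≤ j then γ i j * ξ j t else 0) := by
        intro j
        by_cases h : i ≤ j
        · simp only [h, if_true]
          exact mul_nonneg (hγ_nonneg i j) (hxnn j (hi1.trans h))
        · simp [h]
      have hsum := Summable.sum_le_tsum (Icc 1 q) (fun j _ => hg j) (hsum_loss i hi1 t ht)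
      calc ∑ j ∈ Icc 1 q, (if i ≤ j then γ i j * ξ i t * ξ j t else 0)
          = ξ i t * ∑ j ∈ Icc 1 q, (if i ≤ j then γ i j * ξ j t else 0) := by
            rw [Finset.mul_sum]
            refine Finset.sum_congr rfl fun j _ => ?_
            by_cases h : i ≤ j
            · simp only [h, if_true]; ring
            · simp [h]
        _ ≤ _ := mul_le_mul_of_nonneg_left hsum (hxnn i hi1)
    have hU : ∑ i ∈ Icc 1 q, ∑ j ∈ Icc 1 q, (if i ≤ j then γ i j * ξ i t * ξ j t else 0)
        ≤ ∑ i ∈ Icc 1 q, ξ i t * ∑' j : ℕ, (if i ≤ j then γ i j * ξ j t else 0) :=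
      Finset.sum_le_sum hTbound
    -- split S = U + V
    have hS : ∑ i ∈ Icc 1 q, ∑ j ∈ Icc 1 q, γ i j * ξ i t * ξ j t
        = (∑ i ∈ Icc 1 q, ∑ j ∈ Icc 1 q, (if i ≤ j then γ i j * ξ i t * ξ j t else 0))
          + ∑ i ∈ Icc 1 q, ∑ j ∈ Icc 1 q, (if j < i then γ i j * ξ i t * ξ j t else 0) := by
      rw [← Finset.sum_add_distrib]
      refine Finset.sum_congr rfl fun i _ => ?_
      rw [← Finset.sum_add_distrib]
      refine Finset.sum_congr rfl fun j _ => ?_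
      by_cases h : i ≤ j
      · simp [h, not_lt.mpr h]
      · simp [h, not_le.mp h]
    -- V ≤ U
    have hVU : ∑ i ∈ Icc 1 q, ∑ j ∈ Icc 1 q, (if j < i then γ i j * ξ i t * ξ j t else 0)
        ≤ ∑ i ∈ Icc 1 q, ∑ j ∈ Icc 1 q, (if i ≤ j then γ i j * ξ i t * ξ j t else 0) := by
      rw [Finset.sum_comm]
      refine Finset.sum_le_sum fun i hi => Finset.sum_le_sum fun j hj => ?_
      obtain ⟨hi1, _⟩ := mem_Icc.mp hi
      obtain ⟨hj1, _⟩ := mem_Icc.mp hj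
      by_cases h : i < j
      · rw [if_pos h, if_pos h.le]
        have : γ j i * ξ j t * ξ i t = γ i j * ξ i t * ξ j t := by
          rw [hγ_symm]; ring
        exact this.le
      · rw [if_neg h]
        by_cases h2 : i ≤ j
        · rw [if_pos h2]
          exact hFnn i j hi1 hj1
        · rw [if_neg h2]
    -- nonnegativity facts
    have hAq : 0 ≤ A q := by
      refine mul_nonneg (hxnn q hq) (Finset.sum_nonneg fun j hj => ?_)
      exact mul_nonneg (mul_nonneg (Nat.cast_nonneg j) (hγ_nonneg q j))
        (hxnn j (mem_Icc.mp hj).1)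
    have hSnn : 0 ≤ ∑ i ∈ Icc 1 q, ∑ j ∈ Icc 1 q, γ i j * ξ i t * ξ j t :=
      Finset.sum_nonneg fun i hi => Finset.sum_nonneg fun j hj =>
        hFnn i j (mem_Icc.mp hi).1 (mem_Icc.mp hj).1
    constructor
    · rw [hdsum, hS]
      linarith
    · linarith
  refine ⟨key, ?_⟩
  have hderiv : ∀ t ∈ Set.Ici (0:ℝ),
      HasDerivAt (fun t => ∑ i ∈ Icc 1 q, ξ i t) (∑ i ∈ Icc 1 q, d i t) t := by
    intro t ht
    exact HasDerivAt.fun_sum fun i hi => hξ_deriv i (mem_Icc.mp hi).1 t ht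
  apply antitoneOn_of_deriv_nonpos (convex_Ici 0)
  · exact fun t ht => (hderiv t ht).continuousAt.continuousWithinAt
  · intro t ht
    rw [interior_Ici] at ht
    exact (hderiv t (Set.mem_Ici.mpr (le_of_lt ht))).differentiableAt.differentiableWithinAt
  · intro t ht
    rw [interior_Ici] at ht
    rw [(hderiv t (Set.mem_Ici.mpr (le_of_lt ht))).deriv]
    exact ((key t (Set.mem_Ici.mpr (le_of_lt ht))).1).trans (key t (Set.mem_Ici.mpr (le_of_lt ht))).2
end

section
/- Let ξ = (ξᵢ)_{i≥1} be a nonnegative solution of the discrete Safronov–Dubovskiǐ coagulation equation on [0,∞) with uniformly bounded first moment Σᵢ i ξᵢ(t) ≤ M for all t. Then for every i ≥ 1 the limit ξᵢ^∞ = lim_{t→∞} ξᵢ(t) exists, ξᵢ^∞ ≥ 0, and Σᵢ i ξᵢ^∞ ≤ M. -/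
open Finset Filter

theorem stmt_10 (M : ℝ)
    (γ : ℕ → ℕ → ℝ) (hγ_nonneg : ∀ i j, 0 ≤ γ i j) (hγ_symm : ∀ i j, γ i j = γ j i)
    (ξ : ℕ → ℝ → ℝ) (d : ℕ → ℝ → ℝ)
    (hξ_nonneg : ∀ i : ℕ, 1 ≤ i → ∀ t ∈ Set.Ici (0:ℝ), 0 ≤ ξ i t)
    (hmoment : ∀ t ∈ Set.Ici (0:ℝ), Summable (fun i : ℕ => (i : ℝ) * ξ i t))
    (hmoment_bdd : ∀ t ∈ Set.Ici (0:ℝ),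
      ∑' i : ℕ, (if 1 ≤ i then (i : ℝ) * ξ i t else 0) ≤ M)
    (hsum_loss : ∀ i : ℕ, 1 ≤ i → ∀ t ∈ Set.Ici (0:ℝ),
      Summable (fun j : ℕ => if i ≤ j then γ i j * ξ j t else 0))
    (hξ_deriv : ∀ i : ℕ, 1 ≤ i → ∀ t ∈ Set.Ici (0:ℝ), HasDerivAt (ξ i) (d i t) t)
    (hd : ∀ i : ℕ, 1 ≤ i → ∀ t ∈ Set.Ici (0:ℝ),
      d i t = ξ (i - 1) t * ∑ j ∈ Icc 1 (i - 1), (j : ℝ) * γ (i - 1) j * ξ j t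
        - ξ i t * ∑ j ∈ Icc 1 i, (j : ℝ) * γ i j * ξ j t
        - ξ i t * ∑' j : ℕ, (if i ≤ j then γ i j * ξ j t else 0)) :
    ∃ xiInf : ℕ → ℝ,
      (∀ i : ℕ, 1 ≤ i → Tendsto (fun t => ξ i t) atTop (nhds (xiInf i))) ∧
      (∀ i : ℕ, 1 ≤ i → 0 ≤ xiInf i) ∧
      Summable (fun i : ℕ => if 1 ≤ i then (i : ℝ) * xiInf i else 0) ∧
      ∑' i : ℕ, (if 1 ≤ i then (i : ℝ) * xiInf i else 0) ≤ M := by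
  classical
  -- partial sums
  set F : ℕ → ℝ → ℝ := fun q t => ∑ i ∈ Icc 1 q, ξ i t with hFdef
  set B : ℕ → ℝ → ℝ := fun q t => ξ q t * ∑ j ∈ Icc 1 q, (j : ℝ) * γ q j * ξ j t with hBdef
  have hB0 : ∀ t, B 0 t = 0 := by intro t; simp [hBdef]
  have hBnonneg : ∀ q : ℕ, ∀ t ∈ Set.Ici (0:ℝ), 0 ≤ B q t := by
    intro q t ht
    rcases Nat.eq_zero_or_pos q with h | h
    · simp [h, hB0]
    · apply mul_nonneg (hξ_nonneg q h t ht)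
      apply Finset.sum_nonneg
      intro j hj
      have hj1 : 1 ≤ j := (Finset.mem_Icc.1 hj).1
      exact mul_nonneg (mul_nonneg (by positivity) (hγ_nonneg q j)) (hξ_nonneg j hj1 t ht)
  have hFnonneg : ∀ q : ℕ, ∀ t ∈ Set.Ici (0:ℝ), 0 ≤ F q t := by
    intro q t ht
    apply Finset.sum_nonneg
    intro i hi
    exact hξ_nonneg i (Finset.mem_Icc.1 hi).1 t ht
  have hFderiv : ∀ q : ℕ, ∀ t ∈ Set.Ici (0:ℝ),
      HasDerivAt (F q) (∑ i ∈ Icc 1 q, d i t) t := by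
    intro q t ht
    exact HasDerivAt.fun_sum fun i hi => hξ_deriv i (Finset.mem_Icc.1 hi).1 t ht
  -- derivative nonpositive
  have hderiv_nonpos : ∀ q : ℕ, ∀ t ∈ Set.Ici (0:ℝ), (∑ i ∈ Icc 1 q, d i t) ≤ 0 := by
    intro q t ht
    have hsum : (∑ i ∈ Icc 1 q, d i t)
        = ∑ i ∈ Icc 1 q, (B (i - 1) t - B i t
            - ξ i t * ∑' j : ℕ, (if i ≤ j then γ i j * ξ j t else 0)) := by
      apply Finset.sum_congr rfl
      intro i hi
      rw [hd i (Finset.mem_Icc.1 hi).1 t ht]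
    rw [hsum, Finset.sum_sub_distrib]
    have h1 : (∑ i ∈ Icc 1 q, (B (i - 1) t - B i t)) = B 0 t - B q t := by
      rw [← Finset.Ico_add_one_right_eq_Icc, Finset.sum_Ico_eq_sum_range]
      have : ∀ i ∈ Finset.range (q + 1 - 1), B (1 + i - 1) t - B (1 + i) t
          = B i t - B (i + 1) t := by
        intro i _
        congr 2 <;> omega
      rw [Finset.sum_congr rfl this, Finset.sum_range_sub' (fun i => B i t)]
      simp
    rw [h1, hB0]
    have h2 : 0 ≤ ∑ i ∈ Icc 1 q, ξ i t * ∑' j : ℕ, (if i ≤ j then γ i j * ξ j t else 0) := by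
      apply Finset.sum_nonneg
      intro i hi
      have hi1 : 1 ≤ i := (Finset.mem_Icc.1 hi).1
      apply mul_nonneg (hξ_nonneg i hi1 t ht)
      apply tsum_nonneg
      intro j
      split
      · next hij =>
        exact mul_nonneg (hγ_nonneg i j) (hξ_nonneg j (le_trans hi1 hij) t ht)
      · exact le_rfl
    have h3 := hBnonneg q t ht
    linarith
  -- F q antitone on [0, ∞)
  have hFanti : ∀ q : ℕ, AntitoneOn (F q) (Set.Ici 0) := by
    intro q
    apply antitoneOn_of_deriv_nonpos (convex_Ici 0)
    · intro t ht
      exact ((hFderiv q t ht).continuousAt).continuousWithinAt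
    · intro t ht
      rw [interior_Ici] at ht
      exact ((hFderiv q t (Set.mem_Ici.2 (le_of_lt (Set.mem_Ioi.1 ht)))).differentiableAt).differentiableWithinAt
    · intro t ht
      rw [interior_Ici] at ht
      rw [(hFderiv q t (Set.mem_Ici.2 (le_of_lt (Set.mem_Ioi.1 ht)))).deriv]
      exact hderiv_nonpos q t (Set.mem_Ici.2 (le_of_lt (Set.mem_Ioi.1 ht)))
  -- limits of F q exist
  have hL : ∀ q : ℕ, ∃ l : ℝ, Tendsto (F q) atTop (nhds l) := by
    intro q
    set G : ℝ → ℝ := fun t => F q (max t 0) with hGdef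
    have hGanti : Antitone G := by
      intro a b hab
      exact hFanti q (Set.mem_Ici.2 (le_max_right a 0)) (Set.mem_Ici.2 (le_max_right b 0))
        (max_le_max hab le_rfl)
    have hGbdd : BddBelow (Set.range G) := by
      refine ⟨0, ?_⟩
      rintro x ⟨t, rfl⟩
      exact hFnonneg q _ (Set.mem_Ici.2 (le_max_right t 0))
    refine ⟨⨅ t, G t, ?_⟩
    have hG := tendsto_atTop_ciInf hGanti hGbdd
    apply hG.congr'
    filter_upwards [eventually_ge_atTop (0:ℝ)] with t ht
    simp [hGdef, max_eq_left ht]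
  choose L hLtendsto using hL
  have hten : ∀ i : ℕ, 1 ≤ i → Tendsto (fun t => ξ i t) atTop (nhds (L i - L (i - 1))) := by
    intro i hi
    obtain ⟨m, rfl⟩ : ∃ m, i = m + 1 := ⟨i - 1, by omega⟩
    have hxi : ∀ t : ℝ, ξ (m + 1) t = F (m + 1) t - F (m + 1 - 1) t := by
      intro t
      show ξ (m + 1) t = (∑ k ∈ Icc 1 (m + 1), ξ k t) - ∑ k ∈ Icc 1 (m + 1 - 1), ξ k t
      rw [Finset.sum_Icc_succ_top (by omega : 1 ≤ m + 1) (fun k => ξ k t)]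
      simp
    have := (hLtendsto (m + 1)).sub (hLtendsto (m + 1 - 1))
    exact this.congr fun t => (hxi t).symm
  have hnn : ∀ i : ℕ, 1 ≤ i → 0 ≤ L i - L (i - 1) := by
    intro i hi
    apply ge_of_tendsto (hten i hi)
    filter_upwards [eventually_ge_atTop (0:ℝ)] with t ht
    exact hξ_nonneg i hi t ht
  have hnonneg' : ∀ i : ℕ, 0 ≤ (if 1 ≤ i then (i:ℝ) * (L i - L (i - 1)) else 0) := by
    intro i
    split
    · next h => exact mul_nonneg (Nat.cast_nonneg i) (hnn i h)
    · exact le_rfl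
  have key : ∀ n : ℕ,
      ∑ i ∈ Finset.range n, (if 1 ≤ i then (i:ℝ) * (L i - L (i - 1)) else 0) ≤ M := by
    intro n
    have htend : Tendsto (fun t => ∑ i ∈ Finset.range n, (if 1 ≤ i then (i:ℝ) * ξ i t else 0))
        atTop (nhds (∑ i ∈ Finset.range n, (if 1 ≤ i then (i:ℝ) * (L i - L (i - 1)) else 0))) := by
      apply tendsto_finset_sum
      intro i _
      split
      · next h => exact (hten i h).const_mul _
      · exact tendsto_const_nhds
    apply le_of_tendsto htend
    filter_upwards [eventually_ge_atTop (0:ℝ)] with t ht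
    have hfun : (fun i : ℕ => if 1 ≤ i then (i:ℝ) * ξ i t else 0)
        = fun i : ℕ => (i:ℝ) * ξ i t := by
      funext i
      split
      · rfl
      · next h =>
        have : i = 0 := by omega
        simp [this]
    have hterm : ∀ i : ℕ, 0 ≤ (if 1 ≤ i then (i:ℝ) * ξ i t else 0) := by
      intro i
      split
      · next h => exact mul_nonneg (Nat.cast_nonneg i) (hξ_nonneg i h t ht)
      · exact le_rfl
    calc ∑ i ∈ Finset.range n, (if 1 ≤ i then (i:ℝ) * ξ i t else 0)
        ≤ ∑' i : ℕ, (if 1 ≤ i then (i:ℝ) * ξ i t else 0) :=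
          Summable.sum_le_tsum _ (fun i _ => hterm i) (hfun ▸ hmoment t ht)
      _ ≤ M := hmoment_bdd t ht
  exact ⟨fun i => L i - L (i - 1), hten, hnn,
    summable_of_sum_range_le hnonneg' key,
    Real.tsum_le_of_sum_range_le hnonneg' key⟩
end

section
/- Let u : [0,T] → [0,∞) be continuous with u(t) ≤ u(0) + C ∫₀^t u(s) ds for all t ∈ [0,T], where C ≥ 0. If u(0) = 0 then u ≡ 0 on [0,T]; in general u(t) ≤ u(0) e^{Ct}. Applied with u(t) = Σᵢ i |ξᵢ(t) − ηᵢ(t)| for two solutions ξ, η of the discrete Safronov–Dubovskiǐ equation with the same initial data and C = 4A(Δ_λ(T) + Δ₁), this yields uniqueness of solutions. -/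
open Set intervalIntegral

theorem stmt_13 (T C : ℝ) (hT : 0 < T) (hC : 0 ≤ C)
    (u : ℝ → ℝ)
    (hu_cont : ContinuousOn u (Set.Icc 0 T))
    (hu_nonneg : ∀ t ∈ Set.Icc (0:ℝ) T, 0 ≤ u t)
    (hu_ineq : ∀ t ∈ Set.Icc (0:ℝ) T, u t ≤ u 0 + C * ∫ s in (0:ℝ)..t, u s) :
    (u 0 = 0 → ∀ t ∈ Set.Icc (0:ℝ) T, u t = 0) ∧
    (∀ t ∈ Set.Icc (0:ℝ) T, u t ≤ u 0 * Real.exp (C * t)) := by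
  set v : ℝ → ℝ := fun x => ∫ s in (0:ℝ)..x, u s with hv
  have hint : IntervalIntegrable u MeasureTheory.volume 0 T := by
    apply ContinuousOn.intervalIntegrable
    rwa [Set.uIcc_of_le hT.le]
  have hvcont : ContinuousOn v (Set.Icc 0 T) := by
    have := intervalIntegral.continuousOn_primitive_interval' (a := 0) hint Set.left_mem_uIcc
    rwa [Set.uIcc_of_le hT.le] at this
  have hvderiv : ∀ x ∈ Set.Ico (0:ℝ) T, HasDerivWithinAt v (u x) (Set.Ici x) x := by
    intro x hx
    have hmem : Set.Icc (0:ℝ) T ∈ nhdsWithin x (Set.Ioi x) :=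
      Icc_mem_nhdsGT_of_mem hx
    have hintx : IntervalIntegrable u MeasureTheory.volume 0 x := by
      apply ContinuousOn.intervalIntegrable
      apply hu_cont.mono
      rw [Set.uIcc_of_le hx.1]
      exact Set.Icc_subset_Icc le_rfl hx.2.le
    have hmeas : StronglyMeasurableAtFilter u (nhdsWithin x (Set.Ioi x)) :=
      ⟨Set.Icc 0 T, hmem, (hu_cont.aestronglyMeasurable measurableSet_Icc)⟩
    have hcw : ContinuousWithinAt u (Set.Ioi x) x :=
      ((hu_cont x ⟨hx.1, hx.2.le⟩).mono_of_mem_nhdsWithin hmem)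
    exact intervalIntegral.integral_hasDerivWithinAt_right hintx hmeas hcw
  have hgron : ∀ t ∈ Set.Icc (0:ℝ) T, v t ≤ gronwallBound 0 C (u 0) (t - 0) := by
    apply le_gronwallBound_of_liminf_deriv_right_le hvcont
    · intro x hx r hr
      exact (hvderiv x hx).liminf_right_slope_le hr
    · simp [hv]
    · intro x hx
      have := hu_ineq x ⟨hx.1, hx.2.le⟩
      linarith
  have key : ∀ t ∈ Set.Icc (0:ℝ) T, u t ≤ u 0 * Real.exp (C * t) := by
    intro t ht
    have h1 := hu_ineq t ht
    have h2 := hgron t ht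
    have h3 : C * v t ≤ C * gronwallBound 0 C (u 0) (t - 0) :=
      mul_le_mul_of_nonneg_left h2 hC
    rcases eq_or_ne C 0 with hC0 | hC0
    · subst hC0
      simp only [gronwallBound_K0] at h3
      simp only [zero_mul, Real.exp_zero, mul_one]
      linarith
    · rw [gronwallBound_of_K_ne_0 hC0] at h3
      simp only [sub_zero, zero_mul, zero_add] at h3
      have : u 0 + C * (u 0 / C * (Real.exp (C * t) - 1)) = u 0 * Real.exp (C * t) := by
        field_simp
        ring
      linarith [h1, h3, this ▸ (le_refl (u 0 * Real.exp (C * t)))]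
  refine ⟨fun h0 t ht => le_antisymm ?_ (hu_nonneg t ht), key⟩
  have := key t ht
  rw [h0, zero_mul] at this
  exact this
end

section
/- Let ξ be a nonnegative solution of the discrete Safronov–Dubovskiǐ coagulation equation with γ_{1,1} > 0 and all moments involved finite. Then ξ₁(t+τ) − ξ₁(t) ≤ −γ_{1,1} ∫_t^{t+τ} ξ₁(s)² ds for all t ≥ 0, τ > 0; consequently, since ξ₁(t) converges as t → ∞, its limit ξ₁^∞ satisfies ξ₁^∞ = 0. -/
open Filter intervalIntegral MeasureTheory

theorem stmt_19
    (γ : ℕ → ℕ → ℝ) (hγ_nonneg : ∀ i j, 0 ≤ γ i j) (hγ11 : 0 < γ 1 1)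
    (ξ : ℕ → ℝ → ℝ) (d : ℝ → ℝ)
    (hξ_nonneg : ∀ i : ℕ, 1 ≤ i → ∀ t ∈ Set.Ici (0:ℝ), 0 ≤ ξ i t)
    (hsum : ∀ t ∈ Set.Ici (0:ℝ),
      Summable (fun j : ℕ => if 1 ≤ j then γ 1 j * ξ j t else 0))
    (hderiv : ∀ t ∈ Set.Ici (0:ℝ), HasDerivAt (ξ 1) (d t) t)
    (hd : ∀ t ∈ Set.Ici (0:ℝ),
      d t = -(γ 1 1 * (ξ 1 t) ^ 2)
        - ξ 1 t * ∑' j : ℕ, (if 1 ≤ j then γ 1 j * ξ j t else 0)) :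
    (∀ t ∈ Set.Ici (0:ℝ), ∀ τ > (0:ℝ),
      ξ 1 (t + τ) - ξ 1 t ≤ -(γ 1 1) * ∫ s in t..(t + τ), (ξ 1 s) ^ 2) ∧
    ∀ L : ℝ, Tendsto (ξ 1) atTop (nhds L) → L = 0 := by
  have hcontAt : ∀ x ∈ Set.Ici (0:ℝ), ContinuousAt (ξ 1) x := fun x hx =>
    (hderiv x hx).continuousAt
  have hcontOn : ContinuousOn (ξ 1) (Set.Ici 0) := fun x hx =>
    (hcontAt x hx).continuousWithinAt
  have hsqOn : ContinuousOn (fun s => (ξ 1 s) ^ 2) (Set.Ici 0) := hcontOn.pow 2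
  have main : ∀ t ∈ Set.Ici (0:ℝ), ∀ τ > (0:ℝ),
      ξ 1 (t + τ) - ξ 1 t ≤ -(γ 1 1) * ∫ s in t..(t + τ), (ξ 1 s) ^ 2 := by
    intro t ht τ hτ
    have ht' : (0:ℝ) ≤ t := ht
    have hle : t ≤ t + τ := by linarith
    have hsub : Set.Icc t (t + τ) ⊆ Set.Ici (0:ℝ) := fun x hx => le_trans ht' hx.1
    have hInt : IntervalIntegrable (fun s => (ξ 1 s) ^ 2) volume t (t + τ) :=
      (hsqOn.mono hsub).intervalIntegrable_of_Icc hle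
    set F : ℝ → ℝ := fun x => ξ 1 x + γ 1 1 * ∫ s in t..x, (ξ 1 s) ^ 2 with hF
    have hgcont : ContinuousOn (fun x => ∫ s in t..x, (ξ 1 s) ^ 2) (Set.Icc t (t + τ)) := by
      have := continuousOn_primitive_interval' hInt (by
        rw [Set.uIcc_of_le hle]; exact Set.left_mem_Icc.2 hle)
      rwa [Set.uIcc_of_le hle] at this
    have hFcont : ContinuousOn F (Set.Icc t (t + τ)) :=
      ((hcontOn.mono hsub)).add (continuousOn_const.mul hgcont)
    have hFderiv : ∀ x ∈ Set.Ioo t (t + τ),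
        HasDerivAt F (d x + γ 1 1 * (ξ 1 x) ^ 2) x := by
      intro x hx
      have hx0 : (0:ℝ) < x := lt_of_le_of_lt ht' hx.1
      have hmeas : StronglyMeasurableAtFilter (fun s => (ξ 1 s) ^ 2) (nhds x) volume :=
        ContinuousOn.stronglyMeasurableAtFilter isOpen_Ioi
          (hsqOn.mono Set.Ioi_subset_Ici_self) x hx0
      have hInt' : IntervalIntegrable (fun s => (ξ 1 s) ^ 2) volume t x := by
        apply hInt.mono_set
        rw [Set.uIcc_of_le hle, Set.uIcc_of_le hx.1.le]
        exact Set.Icc_subset_Icc le_rfl hx.2.le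
      have hg : HasDerivAt (fun x => ∫ s in t..x, (ξ 1 s) ^ 2) ((ξ 1 x) ^ 2) x :=
        integral_hasDerivAt_right hInt' hmeas ((hcontAt x hx0.le).pow 2)
      exact (hderiv x hx0.le).add (hg.const_mul _)
    have hanti : AntitoneOn F (Set.Icc t (t + τ)) := by
      apply antitoneOn_of_deriv_nonpos (convex_Icc _ _) hFcont
      · intro x hx
        rw [interior_Icc] at hx
        exact (hFderiv x hx).differentiableAt.differentiableWithinAt
      · intro x hx
        rw [interior_Icc] at hx
        rw [(hFderiv x hx).deriv]
        have hx0 : (0:ℝ) ≤ x := le_trans ht' hx.1.le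
        rw [hd x hx0]
        have h1 : 0 ≤ ξ 1 x := hξ_nonneg 1 le_rfl x hx0
        have h2 : 0 ≤ ∑' j : ℕ, (if 1 ≤ j then γ 1 j * ξ j x else 0) := by
          apply tsum_nonneg
          intro j
          split
          · exact mul_nonneg (hγ_nonneg 1 j) (hξ_nonneg j (by omega) x hx0)
          · exact le_refl 0
        nlinarith [mul_nonneg h1 h2]
    have := hanti (Set.left_mem_Icc.2 hle) (Set.right_mem_Icc.2 hle) hle
    simp only [hF, intervalIntegral.integral_same, mul_zero, add_zero] at this
    linarith
  refine ⟨main, ?_⟩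
  intro L hL
  by_contra hL0
  have hLnonneg : 0 ≤ L := by
    apply ge_of_tendsto hL
    filter_upwards [eventually_ge_atTop (0:ℝ)] with t ht
    exact hξ_nonneg 1 le_rfl t ht
  have hLpos : 0 < L := lt_of_le_of_ne hLnonneg (Ne.symm hL0)
  set c := γ 1 1 * (L / 2) ^ 2 with hc
  have hcpos : 0 < c := by positivity
  -- eventually ξ 1 s ≥ L/2
  have hev : ∀ᶠ s in atTop, L / 2 ≤ ξ 1 s :=
    hL.eventually (eventually_ge_nhds (by linarith))
  -- difference tends to 0
  have hdiff : Tendsto (fun t => ξ 1 (t + 1) - ξ 1 t) atTop (nhds 0) := by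
    have h1 : Tendsto (fun t => ξ 1 (t + 1)) atTop (nhds L) :=
      hL.comp (tendsto_atTop_add_const_right _ 1 tendsto_id)
    simpa using h1.sub hL
  have hev2 : ∀ᶠ t in atTop, -c < ξ 1 (t + 1) - ξ 1 t :=
    hdiff.eventually (eventually_gt_nhds (by linarith))
  obtain ⟨N₁, h₁⟩ := eventually_atTop.1 hev
  obtain ⟨N₂, h₂⟩ := eventually_atTop.1 hev2
  set t := max 0 (max N₁ N₂) with htdef
  have ht0 : (0:ℝ) ≤ t := le_max_left _ _
  have htN1 : N₁ ≤ t := le_trans (le_max_left _ _) (le_max_right _ _)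
  have htN2 : N₂ ≤ t := le_trans (le_max_right _ _) (le_max_right _ _)
  have key := main t ht0 1 one_pos
  have hsub : Set.Icc t (t + 1) ⊆ Set.Ici (0:ℝ) := fun x hx => le_trans ht0 hx.1
  have hInt : IntervalIntegrable (fun s => (ξ 1 s) ^ 2) volume t (t + 1) :=
    (hsqOn.mono hsub).intervalIntegrable_of_Icc (by linarith)
  have hlow : (L / 2) ^ 2 ≤ ∫ s in t..(t + 1), (ξ 1 s) ^ 2 := by
    have hmono : ∫ s in t..(t + 1), (L / 2) ^ 2 ≤ ∫ s in t..(t + 1), (ξ 1 s) ^ 2 := by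
      apply intervalIntegral.integral_mono_on (by linarith) intervalIntegrable_const hInt
      intro x hx
      have : L / 2 ≤ ξ 1 x := h₁ x (le_trans htN1 hx.1)
      have h0 : (0:ℝ) ≤ L / 2 := by linarith
      nlinarith
    rwa [intervalIntegral.integral_const, add_sub_cancel_left, one_smul] at hmono
  have hc2 : -(γ 1 1) * ∫ s in t..(t + 1), (ξ 1 s) ^ 2 ≤ -c := by
    rw [hc]; nlinarith
  have := h₂ t htN2
  linarith
end
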